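/- arXiv:1807.05124 — 7 statements merged into one kernel-verified Lean document; each statement's English description precedes it below -/
import Mathlib

section
/- Let X be a shift space over a finite alphabet A and let w ∈ L(X) be neutral. Then r(w) - 1 = Σ_{a : aw ∈ L(X)} (r(aw) - 1). -/
/-- `L` is factorial: factors of its elements belong to it. -/
def Factorial {A : Type*} (L : Set (List A)) : Prop :=
  ∀ u v : List A, u ++ v ∈ L → u ∈ L ∧ v ∈ L

/-- `L` is (bi)extendable: every word extends by a letter on both sides. -/
def Extendable {A : Type*} (L : Set (List A)) : Prop :=
  ∀ w ∈ L, ∃ a b : A, a :: (w ++ [b]) ∈ L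

/-- number of one-letter left extensions `ℓ(w)`. -/
noncomputable def lcount {A : Type*} (L : Set (List A)) (w : List A) : ℕ :=
  Set.ncard {a : A | a :: w ∈ L}

/-- number of one-letter right extensions `r(w)`. -/
noncomputable def rcount {A : Type*} (L : Set (List A)) (w : List A) : ℕ :=
  Set.ncard {b : A | w ++ [b] ∈ L}

/-- number of one-letter bi-extensions `e(w)`. -/
noncomputable def ecount {A : Type*} (L : Set (List A)) (w : List A) : ℕ :=
  Set.ncard {p : A × A | p.1 :: (w ++ [p.2]) ∈ L}

theorem stmt1 {A : Type*} [Fintype A] (L : Set (List A))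
    (hfac : Factorial L) (hext : Extendable L)
    (w : List A) (hw : w ∈ L)
    (hneutral : (ecount L w : ℤ) - lcount L w - rcount L w + 1 = 0) :
    (rcount L w : ℤ) - 1
      = ∑ᶠ a ∈ {a : A | a :: w ∈ L}, ((rcount L (a :: w) : ℤ) - 1) := by
  classical
  set S : Finset A := Finset.univ.filter (fun a => a :: w ∈ L) with hS
  have hScoe : {a : A | a :: w ∈ L} = (S : Set A) := by
    ext a; simp [hS]
  -- ecount = sum of rcounts over S
  set E : Finset (A × A) := Finset.univ.filter (fun p : A × A => p.1 :: (w ++ [p.2]) ∈ L)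
    with hE
  have hEcard : ecount L w = E.card := by
    rw [ecount]
    rw [show {p : A × A | p.1 :: (w ++ [p.2]) ∈ L} = (E : Set (A × A)) by ext p; simp [hE]]
    rw [Set.ncard_coe_finset]
  have hrcard : ∀ a : A, rcount L (a :: w) =
      (Finset.univ.filter (fun b => a :: (w ++ [b]) ∈ L)).card := by
    intro a
    rw [rcount]
    rw [show {b : A | (a :: w) ++ [b] ∈ L}
        = ((Finset.univ.filter (fun b => a :: (w ++ [b]) ∈ L)) : Set A) by
      ext b; simp]
    rw [Set.ncard_coe_finset]
  have hsplit : E.card = ∑ a ∈ S, (Finset.univ.filter (fun b => a :: (w ++ [b]) ∈ L)).card := by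
    refine (Finset.card_eq_sum_card_fiberwise (f := Prod.fst) (t := S) ?_).trans ?_
    · intro p hp
      simp only [hE, Finset.mem_filter, Finset.mem_univ, true_and] at hp
      have := (hfac (p.1 :: w) [p.2] (by simpa using hp)).1
      simp [hS, this]
    · refine Finset.sum_congr rfl fun a _ => ?_
      refine Finset.card_bij (fun p _ => p.2) ?_ ?_ ?_
      · intro p hp
        simp only [hE, Finset.mem_filter, Finset.mem_univ, true_and] at hp ⊢
        obtain ⟨h1, h2⟩ := hp
        subst h2; exact h1
      · intro p hp q hq hpq
        simp only [hE, Finset.mem_filter] at hp hq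
        exact Prod.ext (hp.2.trans hq.2.symm) hpq
      · intro b hb
        simp only [Finset.mem_filter, Finset.mem_univ, true_and] at hb
        exact ⟨(a, b), by simp [hE, hb], rfl⟩
  have hlcard : lcount L w = S.card := by
    rw [lcount, hScoe, Set.ncard_coe_finset]
  have hfin : ∑ᶠ a ∈ {a : A | a :: w ∈ L}, ((rcount L (a :: w) : ℤ) - 1)
      = ∑ a ∈ S, ((rcount L (a :: w) : ℤ) - 1) := by
    rw [hScoe, finsum_mem_coe_finset]
  rw [hfin, Finset.sum_sub_distrib]
  simp only [Finset.sum_const, nsmul_eq_mul, mul_one]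
  have hE2 : (ecount L w : ℤ) = ∑ a ∈ S, (rcount L (a :: w) : ℤ) := by
    rw [hEcard, hsplit]
    push_cast
    exact Finset.sum_congr rfl fun a _ => by rw [hrcard a]
  rw [← hE2, ← hlcard]
  linarith
end

section
/- Let X be a shift space over a finite alphabet such that every word of length at least n in L(X) is neutral. Then s_m(X) = s_n(X) for all m ≥ n; in particular the sequence sₙ(X) is eventually constant. -/
theorem stmt5 {A : Type*} [Fintype A] (L : Set (List A))
    (hfac : Factorial L) (hext : Extendable L) (n : ℕ)
    (hneut : ∀ w ∈ L, n ≤ w.length →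
      (ecount L w : ℤ) = lcount L w + rcount L w - 1)
    (p : ℕ → ℤ) (hp : ∀ m, p m = Set.ncard {w : List A | w ∈ L ∧ w.length = m})
    (s : ℕ → ℤ) (hs : ∀ m, s m = p (m + 1) - p m) :
    ∀ m, n ≤ m → s m = s n := by
  classical
  have hfin : ∀ m : ℕ, {w : List A | w ∈ L ∧ w.length = m}.Finite := fun m =>
    (List.finite_length_eq A m).subset (fun w hw => hw.2)
  set F : ℕ → Finset (List A) := fun m => (hfin m).toFinset with hF
  have hmemF : ∀ m (w : List A), w ∈ F m ↔ w ∈ L ∧ w.length = m := by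
    intro m w; simp [hF, Set.Finite.mem_toFinset]
  have hpF : ∀ m, p m = (F m).card := by
    intro m; rw [hp, Set.ncard_eq_toFinset_card _ (hfin m)]
  -- right extensions
  have hR : ∀ m, (F (m+1)).card = ∑ w ∈ F m, rcount L w := by
    intro m
    rw [Finset.card_eq_sum_card_fiberwise
      (f := fun u : List A => u.dropLast) (t := F m) ?_]
    · refine Finset.sum_congr rfl fun w hw => ?_
      rw [rcount, Set.ncard_eq_toFinset_card _ (Set.toFinite _)]
      rw [show (F (m+1)).filter (fun u => u.dropLast = w)
            = ((Set.toFinite {b : A | w ++ [b] ∈ L}).toFinset).image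
                (fun b => w ++ [b]) from ?_]
      · rw [Finset.card_image_of_injective]
        intro b b' hbb'
        simpa using List.append_cancel_left hbb'
      · ext u
        simp only [Finset.mem_filter, Finset.mem_image, Set.Finite.mem_toFinset,
          Set.mem_setOf_eq, hmemF]
        constructor
        · rintro ⟨⟨huL, hul⟩, hdrop⟩
          have hne : u ≠ [] := by intro h; simp [h] at hul
          refine ⟨u.getLast hne, ?_, ?_⟩
          · rw [← hdrop, List.dropLast_append_getLast hne]; exact huL
          · rw [← hdrop, List.dropLast_append_getLast hne]
        · rintro ⟨b, hbL, rfl⟩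
          have hwl := (hmemF m w).1 hw
          simp [hbL, hwl.2]
    · intro u hu
      rw [Finset.mem_coe, hmemF] at hu ⊢
      have hne : u ≠ [] := by intro h; simp [h] at hu
      constructor
      · have := List.dropLast_append_getLast hne
        rw [← this] at hu
        exact (hfac _ _ hu.1).1
      · simp [List.length_dropLast, hu.2]
  -- left extensions
  have hL : ∀ m, (F (m+1)).card = ∑ w ∈ F m, lcount L w := by
    intro m
    rw [Finset.card_eq_sum_card_fiberwise
      (f := fun u : List A => u.tail) (t := F m) ?_]
    · refine Finset.sum_congr rfl fun w hw => ?_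
      rw [lcount, Set.ncard_eq_toFinset_card _ (Set.toFinite _)]
      rw [show (F (m+1)).filter (fun u => u.tail = w)
            = ((Set.toFinite {a : A | a :: w ∈ L}).toFinset).image
                (fun a => a :: w) from ?_]
      · rw [Finset.card_image_of_injective]
        intro a a' haa'
        simpa using haa'
      · ext u
        simp only [Finset.mem_filter, Finset.mem_image, Set.Finite.mem_toFinset,
          Set.mem_setOf_eq, hmemF]
        constructor
        · rintro ⟨⟨huL, hul⟩, htail⟩
          have hne : u ≠ [] := by intro h; simp [h] at hul
          refine ⟨u.head hne, ?_, ?_⟩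
          · rw [← htail, List.cons_head_tail]; exact huL
          · rw [← htail, List.cons_head_tail]
        · rintro ⟨a, haL, rfl⟩
          have hwl := (hmemF m w).1 hw
          simp [haL, hwl.2]
    · intro u hu
      rw [Finset.mem_coe, hmemF] at hu ⊢
      have hne : u ≠ [] := by intro h; simp [h] at hu
      constructor
      · have : [u.head hne] ++ u.tail = u := by simp
        rw [← this] at hu
        exact (hfac _ _ hu.1).2
      · simp [List.length_tail, hu.2]
  -- bi-extensions
  have hE : ∀ m, (F (m+2)).card = ∑ w ∈ F m, ecount L w := by
    intro m
    rw [Finset.card_eq_sum_card_fiberwise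
      (f := fun v : List A => v.tail.dropLast) (t := F m) ?_]
    · refine Finset.sum_congr rfl fun w hw => ?_
      rw [ecount, Set.ncard_eq_toFinset_card _ (Set.toFinite _)]
      rw [show (F (m+2)).filter (fun v => v.tail.dropLast = w)
            = ((Set.toFinite {q : A × A | q.1 :: (w ++ [q.2]) ∈ L}).toFinset).image
                (fun q : A × A => q.1 :: (w ++ [q.2])) from ?_]
      · rw [Finset.card_image_of_injective]
        rintro ⟨a, b⟩ ⟨a', b'⟩ h
        simp only [List.cons.injEq] at h
        obtain ⟨rfl, h2⟩ := h
        have := List.append_cancel_left h2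
        simp_all
      · ext v
        simp only [Finset.mem_filter, Finset.mem_image, Set.Finite.mem_toFinset,
          Set.mem_setOf_eq, hmemF]
        constructor
        · rintro ⟨⟨hvL, hvl⟩, hdrop⟩
          have hne : v ≠ [] := by intro h; simp [h] at hvl
          have htne : v.tail ≠ [] := by
            intro h
            have := List.length_tail (l := v)
            rw [h, hvl] at this
            simp at this
          refine ⟨(v.head hne, v.tail.getLast htne), ?_, ?_⟩
          · show v.head hne :: (w ++ [v.tail.getLast htne]) ∈ L
            rw [← hdrop, List.dropLast_append_getLast htne, List.cons_head_tail]
            exact hvL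
          · show v.head hne :: (w ++ [v.tail.getLast htne]) = v
            rw [← hdrop, List.dropLast_append_getLast htne, List.cons_head_tail]
        · rintro ⟨⟨a, b⟩, habL, rfl⟩
          have hwl := (hmemF m w).1 hw
          refine ⟨⟨habL, by simp [hwl.2]⟩, ?_⟩
          simp
    · intro v hv
      rw [Finset.mem_coe, hmemF] at hv ⊢
      have hne : v ≠ [] := by intro h; simp [h] at hv
      have htL : v.tail ∈ L := by
        have : [v.head hne] ++ v.tail = v := by simp
        rw [← this] at hv
        exact (hfac _ _ hv.1).2
      have htne : v.tail ≠ [] := by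
        intro h
        have := List.length_tail (l := v)
        rw [h, hv.2] at this
        simp at this
      constructor
      · have := List.dropLast_append_getLast htne
        rw [← this] at htL
        exact (hfac _ _ htL).1
      · simp [List.length_dropLast, List.length_tail, hv.2]
  -- the step: s (m+1) = s m for m ≥ n
  have hstep : ∀ m, n ≤ m → s (m + 1) = s m := by
    intro m hm
    have hcast : (p (m+2)) = ∑ w ∈ F m, (ecount L w : ℤ) := by
      rw [hpF, hE m]; push_cast; rfl
    have hsum : ∑ w ∈ F m, (ecount L w : ℤ)
        = ∑ w ∈ F m, ((lcount L w : ℤ) + (rcount L w : ℤ) - 1) := by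
      refine Finset.sum_congr rfl fun w hw => ?_
      have hw' := (hmemF m w).1 hw
      exact hneut w hw'.1 (hw'.2 ▸ hm)
    have hLc : (p (m+1)) = ∑ w ∈ F m, (lcount L w : ℤ) := by
      rw [hpF, hL m]; push_cast; rfl
    have hRc : (p (m+1)) = ∑ w ∈ F m, (rcount L w : ℤ) := by
      rw [hpF, hR m]; push_cast; rfl
    have hcard : ∑ w ∈ F m, (1 : ℤ) = p m := by
      rw [hpF]; simp
    have key : p (m+2) = p (m+1) + p (m+1) - p m := by
      rw [hcast, hsum, Finset.sum_sub_distrib, Finset.sum_add_distrib,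
        ← hLc, ← hRc, hcard]
    rw [hs (m+1), hs m]
    have : m + 1 + 1 = m + 2 := rfl
    rw [this, key]
    ring
  intro m hm
  induction m, hm using Nat.le_induction with
  | base => rfl
  | succ k hk ih => rw [hstep k hk, ih]
end

section
/- Let X be an eventually dendric shift space (there is m such that the extension graph E₁(w) is a tree for every w ∈ L(X) of length ≥ m). Then the sequence sₙ(X) = p_{n+1}(X) - pₙ(X) is eventually constant; consequently the complexity pₙ(X) is eventually of the form pₙ(X) = c·n + d, i.e., at most linear. -/
/-- The extension graph `E₁(w)`: bipartite graph on `L₁(w) ⊔ R₁(w)` with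
edges the pairs `(a,b)` such that `awb ∈ L`. -/
def extGraph {A : Type*} (L : Set (List A)) (w : List A) :
    SimpleGraph ({a : A // a :: w ∈ L} ⊕ {b : A // w ++ [b] ∈ L}) where
  Adj x y :=
    match x, y with
    | Sum.inl a, Sum.inr b => a.1 :: (w ++ [b.1]) ∈ L
    | Sum.inr b, Sum.inl a => a.1 :: (w ++ [b.1]) ∈ L
    | _, _ => False
  symm := ⟨by rintro (a | b) (c | d) h <;> first | exact h | exact h.elim⟩
  loopless := ⟨by rintro (a | b) h <;> exact h.elim⟩

/-- `L` is eventually dendric with threshold `m`. -/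
def EvDendricWith {A : Type*} (L : Set (List A)) (m : ℕ) : Prop :=
  ∀ w ∈ L, m ≤ w.length → (extGraph L w).IsTree

/-- `L` is eventually dendric. -/
def EvDendric {A : Type*} (L : Set (List A)) : Prop :=
  ∃ m, EvDendricWith L m


open Classical in
/-- the finset of `L`-words of length `n`. -/
noncomputable def myLn {A : Type*} [Fintype A] (L : Set (List A)) (n : ℕ) : Finset (List A) :=
  Set.Finite.toFinset (s := {w | w ∈ L ∧ w.length = n})
    (Set.Finite.subset (List.finite_length_eq A n) (fun _ hw => hw.2))

lemma mem_myLn {A : Type*} [Fintype A] {L : Set (List A)} {n : ℕ} {w : List A} :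
    w ∈ myLn L n ↔ w ∈ L ∧ w.length = n := by
  simp [myLn]

open Classical in
lemma rcount_eq {A : Type*} [Fintype A] (L : Set (List A)) (w : List A) :
    rcount L w = (Finset.univ.filter (fun b : A => w ++ [b] ∈ L)).card := by
  classical
  rw [rcount, Set.ncard_eq_toFinset_card']
  congr 1
  ext b
  simp

open Classical in
lemma lcount_eq {A : Type*} [Fintype A] (L : Set (List A)) (w : List A) :
    lcount L w = (Finset.univ.filter (fun a : A => a :: w ∈ L)).card := by
  classical
  rw [lcount, Set.ncard_eq_toFinset_card']
  congr 1; ext b; simp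

open Classical in
lemma ecount_eq {A : Type*} [Fintype A] (L : Set (List A)) (w : List A) :
    ecount L w = (Finset.univ.filter (fun p : A × A => p.1 :: (w ++ [p.2]) ∈ L)).card := by
  classical
  rw [ecount, Set.ncard_eq_toFinset_card']
  congr 1; ext b; simp

open Classical in
lemma lemA {A : Type*} [Fintype A] {L : Set (List A)} (hfac : Factorial L) (n : ℕ) :
    (myLn L (n+1)).card = ∑ w ∈ myLn L n, rcount L w := by
  classical
  have hmap : ∀ v ∈ myLn L (n+1), v.dropLast ∈ myLn L n := by
    intro v hv
    rw [mem_myLn] at hv ⊢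
    have hne : v ≠ [] := List.length_pos_iff.mp (by have := hv.2; omega)
    have hv2 : v.dropLast ++ [v.getLast hne] = v := v.dropLast_append_getLast hne
    exact ⟨(hfac _ _ (by rw [hv2]; exact hv.1)).1, by rw [List.length_dropLast, hv.2]; omega⟩
  rw [Finset.card_eq_sum_card_fiberwise hmap]
  refine Finset.sum_congr rfl fun w hw => ?_
  rw [mem_myLn] at hw
  have hinj : Function.Injective (fun b : A => w ++ [b]) := fun a b h => by simpa using h
  rw [rcount_eq, ← Finset.card_image_of_injective _ hinj]
  congr 1
  ext v
  simp only [Finset.mem_filter, Finset.mem_image, Finset.mem_univ, true_and, mem_myLn]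
  constructor
  · rintro ⟨⟨hvL, hvlen⟩, hdl⟩
    have hne : v ≠ [] := List.length_pos_iff.mp (by omega)
    have hv2 : v.dropLast ++ [v.getLast hne] = v := v.dropLast_append_getLast hne
    refine ⟨v.getLast hne, ?_, ?_⟩ <;> rw [← hdl]
    · rw [hv2]; exact hvL
    · exact hv2
  · rintro ⟨b, hb, rfl⟩
    exact ⟨⟨hb, by simp [hw.2]⟩, by simp⟩

open Classical in
lemma lemB {A : Type*} [Fintype A] {L : Set (List A)} (hfac : Factorial L) (n : ℕ) :
    (myLn L (n+1)).card = ∑ w ∈ myLn L n, lcount L w := by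
  classical
  have hmap : ∀ v ∈ myLn L (n+1), v.tail ∈ myLn L n := by
    intro v hv
    rw [mem_myLn] at hv ⊢
    have hne : v ≠ [] := List.length_pos_iff.mp (by have := hv.2; omega)
    have hv2 : [v.head hne] ++ v.tail = v := by simp
    refine ⟨(hfac _ _ (by rw [hv2]; exact hv.1)).2, ?_⟩
    rw [List.length_tail, hv.2]; omega
  rw [Finset.card_eq_sum_card_fiberwise hmap]
  refine Finset.sum_congr rfl fun w hw => ?_
  rw [mem_myLn] at hw
  have hinj : Function.Injective (fun a : A => a :: w) := fun a b h => by simpa using h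
  rw [lcount_eq, ← Finset.card_image_of_injective _ hinj]
  congr 1
  ext v
  simp only [Finset.mem_filter, Finset.mem_image, Finset.mem_univ, true_and, mem_myLn]
  constructor
  · rintro ⟨⟨hvL, hvlen⟩, hdl⟩
    have hne : v ≠ [] := List.length_pos_iff.mp (by omega)
    have hv2 : v.head hne :: v.tail = v := List.cons_head_tail hne
    refine ⟨v.head hne, ?_, ?_⟩ <;> rw [← hdl]
    · rw [hv2]; exact hvL
    · exact hv2
  · rintro ⟨b, hb, rfl⟩
    exact ⟨⟨hb, by simp [hw.2]⟩, by simp⟩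

open Classical in
lemma lemC {A : Type*} [Fintype A] {L : Set (List A)} (hfac : Factorial L) (n : ℕ) :
    (myLn L (n+2)).card = ∑ w ∈ myLn L n, ecount L w := by
  classical
  have hmap : ∀ v ∈ myLn L (n+2), v.tail.dropLast ∈ myLn L n := by
    intro v hv
    rw [mem_myLn] at hv ⊢
    have hne : v ≠ [] := List.length_pos_iff.mp (by have := hv.2; omega)
    have hv2 : [v.head hne] ++ v.tail = v := by simp
    have htL : v.tail ∈ L := (hfac _ _ (by rw [hv2]; exact hv.1)).2
    have hlt : v.tail.length = n + 1 := by rw [List.length_tail, hv.2]; omega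
    have htne : v.tail ≠ [] := List.length_pos_iff.mp (by omega)
    have hv3 : v.tail.dropLast ++ [v.tail.getLast htne] = v.tail :=
      v.tail.dropLast_append_getLast htne
    refine ⟨(hfac _ _ (by rw [hv3]; exact htL)).1, ?_⟩
    rw [List.length_dropLast, hlt]; omega
  rw [Finset.card_eq_sum_card_fiberwise hmap]
  refine Finset.sum_congr rfl fun w hw => ?_
  rw [mem_myLn] at hw
  have hinj : Function.Injective (fun p : A × A => p.1 :: (w ++ [p.2])) := by
    intro a b h
    simp only [List.cons.injEq, List.append_cancel_left_eq, List.cons.injEq, and_true] at h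
    exact Prod.ext h.1 h.2
  rw [ecount_eq, ← Finset.card_image_of_injective _ hinj]
  congr 1
  ext v
  simp only [Finset.mem_filter, Finset.mem_image, Finset.mem_univ, true_and, mem_myLn]
  constructor
  · rintro ⟨⟨hvL, hvlen⟩, hdl⟩
    have hne : v ≠ [] := List.length_pos_iff.mp (by omega)
    have hv2 : v.head hne :: v.tail = v := List.cons_head_tail hne
    have hlt : v.tail.length = n + 1 := by rw [List.length_tail, hvlen]; omega
    have htne : v.tail ≠ [] := List.length_pos_iff.mp (by omega)
    have hv3 : v.tail.dropLast ++ [v.tail.getLast htne] = v.tail :=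
      v.tail.dropLast_append_getLast htne
    refine ⟨(v.head hne, v.tail.getLast htne), ?_, ?_⟩
    · show v.head hne :: (w ++ [v.tail.getLast htne]) ∈ L
      rw [← hdl, hv3, hv2]; exact hvL
    · show v.head hne :: (w ++ [v.tail.getLast htne]) = v
      rw [← hdl, hv3, hv2]
  · rintro ⟨p, hp, rfl⟩
    refine ⟨⟨hp, by simp [hw.2]⟩, by simp⟩

open Classical in
lemma lemD {A : Type*} [Fintype A] {L : Set (List A)} (hfac : Factorial L)
    {w : List A} (ht : (extGraph L w).IsTree) :
    ecount L w + 1 = lcount L w + rcount L w := by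
  classical
  haveI : Fintype ({a : A // a :: w ∈ L} ⊕ {b : A // w ++ [b] ∈ L}) := Fintype.ofFinite _
  haveI : Fintype (extGraph L w).edgeSet := Fintype.ofFinite _
  have hcard := ht.card_edgeFinset
  rw [← Nat.card_eq_fintype_card] at hcard
  have hV : Nat.card ({a : A // a :: w ∈ L} ⊕ {b : A // w ++ [b] ∈ L})
      = lcount L w + rcount L w := by
    rw [Nat.card_sum, lcount, rcount, ← Nat.card_coe_set_eq, ← Nat.card_coe_set_eq]
    rfl
  have hE : ecount L w = (extGraph L w).edgeFinset.card := by
    have h1 : ecount L w = Nat.card {p : A × A | p.1 :: (w ++ [p.2]) ∈ L} := by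
      rw [ecount, Nat.card_coe_set_eq]
    have h2 : (extGraph L w).edgeFinset.card = Nat.card (extGraph L w).edgeSet := by
      rw [SimpleGraph.edgeFinset, Set.toFinset_card, Nat.card_eq_fintype_card]
    rw [h1, h2]
    refine Nat.card_eq_of_bijective
      (fun p => ⟨s(Sum.inl ⟨p.1.1, (hfac (p.1.1 :: w) [p.1.2] ((List.cons_append (a := p.1.1) (as := w) (bs := [p.1.2])).symm ▸ p.2)).1⟩,
                  Sum.inr ⟨p.1.2, (hfac [p.1.1] (w ++ [p.1.2]) p.2).2⟩),
        (SimpleGraph.mem_edgeSet (G := extGraph L w)).mpr p.2⟩) ⟨?_, ?_⟩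
    · rintro ⟨⟨a, b⟩, hab⟩ ⟨⟨c, d⟩, hcd⟩ h
      simp only [Subtype.mk.injEq, Sym2.eq_iff] at h
      rcases h with ⟨h1, h2⟩ | ⟨h1, h2⟩
      · simp only [Sum.inl.injEq, Sum.inr.injEq, Subtype.mk.injEq] at h1 h2
        simp [Prod.ext_iff, h1, h2]
      · exact absurd h1 (by simp)
    · rintro ⟨e, he⟩
      induction e using Sym2.ind with
      | _ x y =>
        rw [SimpleGraph.mem_edgeSet] at he
        match x, y with
        | Sum.inl a, Sum.inr b =>
          exact ⟨⟨(a.1, b.1), he⟩, Subtype.ext (by congr 1 <;> simp)⟩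
        | Sum.inr b, Sum.inl a =>
          refine ⟨⟨(a.1, b.1), he⟩, Subtype.ext (Eq.trans ?_ Sym2.eq_swap)⟩
          congr 1 <;> simp
  rw [hE, hcard, hV]

theorem stmt6 {A : Type*} [Fintype A] (L : Set (List A))
    (hfac : Factorial L) (hext : Extendable L)
    (hdendric : EvDendric L)
    (p : ℕ → ℤ) (hp : ∀ m, p m = Set.ncard {w : List A | w ∈ L ∧ w.length = m})
    (s : ℕ → ℤ) (hs : ∀ m, s m = p (m + 1) - p m) :
    ∃ N : ℕ, (∀ n, N ≤ n → s n = s N) ∧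
      ∃ c d : ℤ, ∀ n, N ≤ n → p n = c * n + d := by
  classical
  obtain ⟨m, hm⟩ := hdendric
  have hpc : ∀ n, p n = ((myLn L n).card : ℤ) := by
    intro n
    rw [hp n]
    congr 1
    exact Set.ncard_eq_toFinset_card _ _
  have key : ∀ n, m ≤ n →
      (myLn L (n+2)).card + (myLn L n).card = 2 * (myLn L (n+1)).card := by
    intro n hn
    have e1 := lemC hfac n
    have e2 := lemA hfac n
    have e3 := lemB hfac n
    have hD : ∀ w ∈ myLn L n, ecount L w + 1 = lcount L w + rcount L w := by
      intro v hv
      rw [mem_myLn] at hv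
      exact lemD hfac (hm v hv.1 (by omega))
    have hcn : (myLn L n).card = ∑ _w ∈ myLn L n, 1 := Finset.card_eq_sum_ones _
    calc (myLn L (n+2)).card + (myLn L n).card
        = ∑ w ∈ myLn L n, (ecount L w + 1) := by
          rw [e1, hcn, Finset.sum_add_distrib]
      _ = ∑ w ∈ myLn L n, (lcount L w + rcount L w) :=
          Finset.sum_congr rfl hD
      _ = 2 * (myLn L (n+1)).card := by
          rw [Finset.sum_add_distrib, ← e2, ← e3]; ring
  have skey : ∀ n, m ≤ n → s (n + 1) = s n := by
    intro n hn
    have h := key n hn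
    have hz : ((myLn L (n+2)).card : ℤ) + ((myLn L n).card : ℤ)
        = 2 * ((myLn L (n+1)).card : ℤ) := by exact_mod_cast h
    rw [hs, hs, hpc, hpc, hpc n]
    linarith
  have sconst : ∀ n, m ≤ n → s n = s m := by
    intro n hn
    induction n, hn using Nat.le_induction with
    | base => rfl
    | succ n hn ih => rw [skey n hn, ih]
  refine ⟨m, sconst, s m, p m - s m * m, ?_⟩
  intro n hn
  induction n, hn using Nat.le_induction with
  | base => ring
  | succ n hn ih =>
    have h1 : p (n + 1) = p n + s n := by rw [hs n]; ring
    rw [h1, ih, sconst n hn]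
    push_cast
    ring
end

section
/- Let X be a shift space over a finite alphabet such that sₙ(X) = p_{n+1}(X) - pₙ(X) ≤ k for all n. If (x₁,y₁),…,(x_ℓ,y_ℓ) are pairs of elements of X with x_i⁺ = y_i⁺ (equal right halves x_i[0,∞) = y_i[0,∞)) and (x_i)_{-1} ≠ (y_i)_{-1} for each i, and the right-infinite words x₁⁺, …, x_ℓ⁺ are pairwise distinct, then ℓ ≤ k. -/
/-- The language of a set `X ⊆ A^ℤ` of two-sided infinite words: all finite
factors of elements of `X`. -/
def lang {A : Type*} (X : Set (ℤ → A)) : Set (List A) :=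
  {w | ∃ x ∈ X, ∃ k : ℤ, ∀ i : Fin w.length, w.get i = x (k + (i : ℤ))}

lemma lang_cons_exists {A : Type*} {X : Set (ℤ → A)} {w : List A} (h : w ∈ lang X) :
    ∃ c : A, c :: w ∈ lang X := by
  obtain ⟨x, hx, k, hw⟩ := h
  refine ⟨x (k - 1), x, hx, k - 1, ?_⟩
  intro i
  induction i using Fin.cases with
  | zero => simp
  | succ j =>
      have h1 : (x (k - 1) :: w).get j.succ = w.get j := rfl
      rw [h1, hw j]
      congr 1
      have : ((j.succ : Fin (w.length + 1)) : ℤ) = (j : ℤ) + 1 := by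
        simp [Fin.val_succ]
      rw [this]
      ring

theorem stmt11 {A : Type*} [Fintype A] (X : Set (ℤ → A)) (k : ℕ)
    (hs : ∀ n : ℕ,
      (Set.ncard {w : List A | w ∈ lang X ∧ w.length = n + 1} : ℤ)
        - Set.ncard {w : List A | w ∈ lang X ∧ w.length = n} ≤ (k : ℤ))
    (l : ℕ) (x y : Fin l → (ℤ → A))
    (hx : ∀ i, x i ∈ X) (hy : ∀ i, y i ∈ X)
    (heq : ∀ i, ∀ n : ℕ, x i (n : ℤ) = y i (n : ℤ))
    (hneq : ∀ i, x i (-1) ≠ y i (-1))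
    (hdist : ∀ i j, i ≠ j → ∃ n : ℕ, x i (n : ℤ) ≠ x j (n : ℤ)) :
    l ≤ k := by
  classical
  -- choose N large enough so that all prefixes of length N are distinct
  obtain ⟨N, hNbig⟩ : ∃ N : ℕ, ∀ i j : Fin l, i ≠ j →
      ∃ n : ℕ, n < N ∧ x i (n : ℤ) ≠ x j (n : ℤ) := by
    refine ⟨(Finset.univ.sup fun p : Fin l × Fin l =>
      if h : p.1 ≠ p.2 then (hdist p.1 p.2 h).choose else 0) + 1, ?_⟩
    intro i j hne
    refine ⟨(hdist i j hne).choose, ?_, (hdist i j hne).choose_spec⟩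
    have hle := Finset.le_sup (f := fun p : Fin l × Fin l =>
      if h : p.1 ≠ p.2 then (hdist p.1 p.2 h).choose else 0) (Finset.mem_univ (i, j))
    simp only [dif_pos hne] at hle
    omega
  -- the prefixes
  set wd : Fin l → List A := fun i => List.ofFn (fun t : Fin N => x i ((t : ℕ) : ℤ))
    with hwd
  have hwdlen : ∀ i, (wd i).length = N := by intro i; simp [hwd]
  have hwdget : ∀ i (n : ℕ) (h : n < (wd i).length), (wd i)[n] = x i (n : ℤ) := by
    intro i n h
    simp only [hwd]
    rw [List.getElem_ofFn]
  have hwd_inj : Function.Injective wd := by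
    intro i j hij
    by_contra hne
    obtain ⟨n, hnN, hn⟩ := hNbig i j hne
    apply hn
    have hni : n < (wd i).length := by rw [hwdlen]; omega
    have hnj : n < (wd j).length := by rw [hwdlen]; omega
    rw [← hwdget i n hni, ← hwdget j n hnj]
    exact List.getElem_of_eq hij hni
  set S : Set (List A) := {w : List A | w ∈ lang X ∧ w.length = N} with hS
  set T : Set (List A) := {w : List A | w ∈ lang X ∧ w.length = N + 1} with hT
  have hSfin : S.Finite := (List.finite_length_eq A N).subset (fun w hw => hw.2)
  have hTfin : T.Finite := (List.finite_length_eq A (N + 1)).subset (fun w hw => hw.2)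
  have hwdS : ∀ i, wd i ∈ S := by
    intro i
    refine ⟨⟨x i, hx i, 0, ?_⟩, hwdlen i⟩
    intro t
    rw [List.get_eq_getElem, hwdget i t t.isLt]
    congr 1
    ring
  -- extension map F
  set F : List A → List A := fun u =>
    if h : ∃ c : A, c :: u ∈ lang X then h.choose :: u else u with hF
  have hFspec : ∀ u ∈ S, F u ∈ T ∧ (F u).tail = u := by
    intro u hu
    have hex : ∃ c : A, c :: u ∈ lang X := lang_cons_exists hu.1
    simp only [hF, dif_pos hex]
    exact ⟨⟨hex.choose_spec, by simp [hu.2]⟩, rfl⟩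
  -- membership of the two extensions of wd i
  have hmem : ∀ (i : Fin l) (c : A) (z : ℤ → A), z ∈ X → z (-1) = c →
      (∀ (n : ℕ) (h : n < (wd i).length), (wd i)[n] = z (n : ℤ)) →
      c :: wd i ∈ lang X := by
    intro i c z hz hzc hzt
    refine ⟨z, hz, -1, ?_⟩
    intro j
    induction j using Fin.cases with
    | zero => simpa using hzc.symm
    | succ t =>
        have h1 : (c :: wd i).get t.succ = (wd i)[(t : ℕ)]'t.isLt := rfl
        rw [h1, hzt t t.isLt]
        congr 1
        have : ((t.succ : Fin ((wd i).length + 1)) : ℤ) = (t : ℤ) + 1 := by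
          simp [Fin.val_succ]
        rw [this]
        ring
  have hxmem : ∀ i, x i (-1) :: wd i ∈ lang X := fun i =>
    hmem i _ (x i) (hx i) rfl (fun n h => hwdget i n h)
  have hymem : ∀ i, y i (-1) :: wd i ∈ lang X := fun i =>
    hmem i _ (y i) (hy i) rfl (fun n h => (hwdget i n h).trans (heq i n))
  -- map G
  set G : Fin l → List A := fun i =>
    if x i (-1) :: wd i = F (wd i) then y i (-1) :: wd i else x i (-1) :: wd i with hG
  have hGT : ∀ i, G i ∈ T := by
    intro i
    simp only [hG]
    split
    · exact ⟨hymem i, by simp [hwdlen i]⟩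
    · exact ⟨hxmem i, by simp [hwdlen i]⟩
  have hGtail : ∀ i, (G i).tail = wd i := by
    intro i; simp only [hG]; split <;> rfl
  have hGne : ∀ i, G i ≠ F (wd i) := by
    intro i
    simp only [hG]
    split
    · rename_i h
      rw [← h]
      intro hcon
      exact hneq i ((List.cons_eq_cons.mp hcon).1).symm
    · rename_i h
      exact h
  -- injectivity facts
  have hFinj : Set.InjOn F S := by
    intro u hu v hv huv
    have h1 := (hFspec u hu).2
    have h2 := (hFspec v hv).2
    rw [← h1, ← h2, huv]
  have hGinj : Function.Injective G := by
    intro i j hij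
    apply hwd_inj
    rw [← hGtail i, ← hGtail j, hij]
  have hdisj : Disjoint (F '' S) (Set.range G) := by
    rw [Set.disjoint_left]
    rintro a ⟨u, hu, rfl⟩ ⟨i, hGi⟩
    have htu : u = wd i := by
      rw [← (hFspec u hu).2, ← hGtail i, hGi]
    exact hGne i (by rw [hGi, htu])
  -- counting
  have hsub : (F '' S) ∪ Set.range G ⊆ T := by
    rintro a (⟨u, hu, rfl⟩ | ⟨i, rfl⟩)
    · exact (hFspec u hu).1
    · exact hGT i
  have hcard1 : (F '' S ∪ Set.range G).ncard ≤ T.ncard :=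
    Set.ncard_le_ncard hsub hTfin
  have hcard2 : (F '' S ∪ Set.range G).ncard = S.ncard + l := by
    rw [Set.ncard_union_eq hdisj (hSfin.image F) (Set.finite_range G),
      Set.ncard_image_of_injOn hFinj]
    congr 1
    rw [← Set.image_univ, Set.ncard_image_of_injOn (hGinj.injOn),
      Set.ncard_univ, Nat.card_eq_fintype_card, Fintype.card_fin]
  have hkey : S.ncard + l ≤ T.ncard := hcard2 ▸ hcard1
  have hsN := hs N
  rw [← hS, ← hT] at hsN
  omega
end

section
/- Let X be a shift space over finite alphabet A such that every word of length ≥ m in L(X) is neutral. Then for every finite X-maximal suffix code U ⊆ L(X) all of whose words have length ≥ m, one has Σ_{u ∈ U} (r(u) - 1) = Σ_{w ∈ L_m(X)} (r(w) - 1), where r(u) = #{b ∈ A : ub ∈ L(X)}. -/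
open scoped Classical

/-- `U` is a suffix code: no word of `U` is a proper suffix of another. -/
def IsSuffixCode {A : Type*} (U : Set (List A)) : Prop :=
  ∀ u ∈ U, ∀ v ∈ U, u <:+ v → u = v

/-- `U ⊆ L` is an `X`-maximal suffix code: it is not properly contained in a
suffix code contained in `L`. -/
def IsMaximalSuffixCode {A : Type*} (L U : Set (List A)) : Prop :=
  U ⊆ L ∧ IsSuffixCode U ∧
    ∀ U' : Set (List A), U' ⊆ L → IsSuffixCode U' → U ⊆ U' → U = U'

namespace Stmt14Aux

lemma ncard_setOf_eq {B : Type*} [Fintype B] (p : B → Prop) :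
    Set.ncard {a | p a} = (Finset.univ.filter p).card := by
  rw [Set.ncard_eq_toFinset_card']
  congr 1
  ext a
  simp

/-- Every word of `L` of length at least `K` has a suffix in `U`. -/
def Complete {A : Type*} (L U : Set (List A)) (K : ℕ) : Prop :=
  ∀ x ∈ L, K ≤ x.length → ∃ v ∈ U, v <:+ x

variable {A : Type*}

lemma extend_left {L : Set (List A)} (hfac : Factorial L) (hext : Extendable L) :
    ∀ n : ℕ, ∀ x ∈ L, ∃ y ∈ L, x <:+ y ∧ y.length = x.length + n := by
  intro n
  induction n with
  | zero => exact fun x hx => ⟨x, hx, List.suffix_refl x, rfl⟩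
  | succ n ih =>
    intro x hx
    obtain ⟨y, hy, hsuf, hlen⟩ := ih x hx
    obtain ⟨a, b, hab⟩ := hext y hy
    have h1 : (a :: y) ++ [b] ∈ L := by simpa using hab
    have h2 : a :: y ∈ L := (hfac (a :: y) [b] h1).1
    exact ⟨a :: y, h2, hsuf.trans (List.suffix_cons a y), by rw [List.length_cons, hlen]; ring⟩

lemma complete_mono {L U : Set (List A)} (hfac : Factorial L) (hext : Extendable L)
    {K K' : ℕ} (hlen : ∀ u ∈ U, u.length ≤ K') (h : Complete L U K) :
    Complete L U K' := by
  intro x hx hK'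
  obtain ⟨y, hy, hsuf, hylen⟩ := extend_left hfac hext K x hx
  obtain ⟨v, hv, hvy⟩ := h y hy (by omega)
  refine ⟨v, hv, List.suffix_of_suffix_length_le hvy hsuf ?_⟩
  have := hlen v hv; omega

lemma maximal_complete {L U : Set (List A)} (hfac : Factorial L) (hUfin : U.Finite)
    (hUmax : IsMaximalSuffixCode L U) : ∃ K, Complete L U K := by
  obtain ⟨hsub, hcode, hmax⟩ := hUmax
  refine ⟨hUfin.toFinset.sup List.length, ?_⟩
  set K := hUfin.toFinset.sup List.length with hKdef
  intro x hx hK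
  by_contra hcon
  push_neg at hcon
  set x' := x.drop (x.length - K) with hx'def
  have hx'suf : x' <:+ x := List.drop_suffix _ _
  have hx'len : x'.length = K := by
    rw [hx'def, List.length_drop]; omega
  have hx'L : x' ∈ L := by
    obtain ⟨t, ht⟩ := hx'suf
    exact (hfac t x' (ht ▸ hx)).2
  have hx'notU : x' ∉ U := fun h => hcon x' h hx'suf
  have hcode' : IsSuffixCode (U ∪ {x'}) := by
    rintro u hu v hv hsuf
    rcases hu with hu | hu
    · rcases hv with hv | hv
      · exact hcode u hu v hv hsuf
      · rw [Set.mem_singleton_iff] at hv; subst hv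
        exact absurd (hsuf.trans hx'suf) (hcon u hu)
    · rw [Set.mem_singleton_iff] at hu; subst hu
      rcases hv with hv | hv
      · have hvK : v.length ≤ K := by
          rw [hKdef]; exact Finset.le_sup (hUfin.mem_toFinset.mpr hv)
        have hlle := hsuf.length_le
        exact hsuf.eq_of_length (by omega)
      · rw [Set.mem_singleton_iff] at hv; exact hv ▸ rfl
  have heq := hmax (U ∪ {x'}) (Set.union_subset hsub (by simpa using hx'L)) hcode'
    Set.subset_union_left
  exact hx'notU (heq ▸ Set.mem_union_right _ rfl)

variable [Fintype A]

omit [Fintype A] in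
lemma base {L : Set (List A)} (hfac : Factorial L) (hext : Extendable L) {m : ℕ}
    {U : Finset (List A)} (hsub : (U : Set (List A)) ⊆ L)
    (hlenle : ∀ u ∈ U, u.length ≤ m) (hlenge : ∀ u ∈ U, m ≤ u.length)
    (hcomp : ∃ K, Complete L (U : Set (List A)) K) :
    (↑U : Set (List A)) = {w : List A | w ∈ L ∧ w.length = m} := by
  obtain ⟨K, hK⟩ := hcomp
  have hKm : Complete L ↑U m :=
    complete_mono hfac hext (fun u hu => hlenle u (Finset.mem_coe.mp hu)) hK
  ext x
  constructor
  · intro hx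
    exact ⟨hsub hx, le_antisymm (hlenle x (Finset.mem_coe.mp hx)) (hlenge x (Finset.mem_coe.mp hx))⟩
  · rintro ⟨hxL, hxm⟩
    obtain ⟨v, hv, hsuf⟩ := hKm x hxL (le_of_eq hxm.symm)
    have hvlen : v.length = x.length := by
      rw [hxm]
      exact le_antisymm (hlenle v (Finset.mem_coe.mp hv)) (hlenge v (Finset.mem_coe.mp hv))
    exact (hsuf.eq_of_length hvlen) ▸ hv

lemma key {L : Set (List A)} (hfac : Factorial L) (hext : Extendable L) {m : ℕ}
    (hneut : ∀ w ∈ L, m ≤ w.length →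
      (ecount L w : ℤ) = lcount L w + rcount L w - 1) :
    ∀ N : ℕ, ∀ U : Finset (List A), (U : Set (List A)) ⊆ L → IsSuffixCode (U : Set (List A)) →
      (∀ u ∈ U, m ≤ u.length) → (∃ K, Complete L (U : Set (List A)) K) →
      (∑ u ∈ U, u.length) ≤ N →
      ∑ u ∈ U, ((rcount L u : ℤ) - 1)
        = ∑ᶠ w ∈ {w : List A | w ∈ L ∧ w.length = m}, ((rcount L w : ℤ) - 1) := by
  intro N
  induction N with
  | zero =>
    intro U hsub hcode hlen hcomp hsum
    have hlenle : ∀ u ∈ U, u.length ≤ m := by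
      intro u hu
      have h1 : u.length ≤ ∑ v ∈ U, v.length :=
        Finset.single_le_sum (fun i _ => Nat.zero_le _) hu
      omega
    rw [← base hfac hext hsub hlenle hlen hcomp, finsum_mem_coe_finset]
  | succ N ih =>
    intro U hsub hcode hlen hcomp hsum
    by_cases hbig : ∃ u ∈ U, m < u.length
    case neg =>
      push_neg at hbig
      rw [← base hfac hext hsub hbig hlen hcomp, finsum_mem_coe_finset]
    case pos =>
      obtain ⟨u₀, hu₀U, hu₀m⟩ := hbig
      obtain ⟨u, huU, humax⟩ := Finset.exists_max_image U List.length ⟨u₀, hu₀U⟩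
      have hum : m < u.length := lt_of_lt_of_le hu₀m (humax u₀ hu₀U)
      have hune : u ≠ [] := by intro h; rw [h] at hum; simp at hum
      obtain ⟨a, w, rfl⟩ := List.exists_cons_of_ne_nil hune
      have hawL : a :: w ∈ L := hsub (Finset.mem_coe.mpr huU)
      have hwL : w ∈ L := (hfac [a] w (by simpa using hawL)).2
      have hwm : m ≤ w.length := by
        rw [List.length_cons] at hum; omega
      have hcompK' : Complete L (U : Set (List A)) (w.length + 1) := by
        obtain ⟨K, hK⟩ := hcomp
        refine complete_mono hfac hext (fun v hv => ?_) hK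
        have := humax v (Finset.mem_coe.mp hv)
        simpa using this
      have hbw : ∀ b : A, b :: w ∈ L → b :: w ∈ U := by
        intro b hb
        obtain ⟨v, hv, hsuf⟩ := hcompK' (b :: w) hb (by simp)
        rcases List.suffix_cons_iff.mp hsuf with h | h
        · exact Finset.mem_coe.mp (h ▸ hv)
        · exfalso
          have hv' : v = a :: w :=
            hcode v hv (a :: w) (Finset.mem_coe.mpr huU) (h.trans (List.suffix_cons a w))
          have := h.length_le
          rw [hv'] at this
          simp at this
      set T : Finset (List A) := U.filter (fun x => ∃ b : A, x = b :: w) with hT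
      have hawT : a :: w ∈ T := Finset.mem_filter.mpr ⟨huU, a, rfl⟩
      have hTU : T ⊆ U := Finset.filter_subset _ _
      have hwnotU : w ∉ U := by
        intro h
        have heq := hcode w (Finset.mem_coe.mpr h) (a :: w) (Finset.mem_coe.mpr huU)
          (List.suffix_cons a w)
        simpa using congrArg List.length heq
      set U'' : Finset (List A) := (U \ T) ∪ {w} with hU''
      have hmem : ∀ x, x ∈ U'' ↔ (x ∈ U ∧ x ∉ T) ∨ x = w := by
        intro x
        simp [hU'', Finset.mem_union, Finset.mem_sdiff, Finset.mem_singleton]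
        exact or_comm
      have hsub'' : (U'' : Set (List A)) ⊆ L := by
        intro x hx
        rcases (hmem x).mp (Finset.mem_coe.mp hx) with ⟨hxU, _⟩ | rfl
        · exact hsub (Finset.mem_coe.mpr hxU)
        · exact hwL
      have hcode'' : IsSuffixCode (U'' : Set (List A)) := by
        intro p hp q hq hsuf
        rcases (hmem p).mp (Finset.mem_coe.mp hp) with ⟨hpU, hpT⟩ | hpw
        · rcases (hmem q).mp (Finset.mem_coe.mp hq) with ⟨hqU, hqT⟩ | hqw
          · exact hcode p (Finset.mem_coe.mpr hpU) q (Finset.mem_coe.mpr hqU) hsuf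
          · exfalso
            rw [hqw] at hsuf
            have hp' : p = a :: w :=
              hcode p (Finset.mem_coe.mpr hpU) (a :: w) (Finset.mem_coe.mpr huU)
                (hsuf.trans (List.suffix_cons a w))
            have hll := hsuf.length_le
            rw [hp'] at hll
            simp at hll
        · rcases (hmem q).mp (Finset.mem_coe.mp hq) with ⟨hqU, hqT⟩ | hqw
          · rw [hpw] at hsuf ⊢
            by_contra hne
            obtain ⟨t, ht⟩ := hsuf
            rcases t.eq_nil_or_concat with rfl | ⟨t₀, b, rfl⟩
            · exact hne (by simpa using ht)
            · have hy2 : t₀ ++ (b :: w) = q := by simpa using ht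
              have hbwL : b :: w ∈ L :=
                (hfac t₀ (b :: w) (by rw [hy2]; exact hsub (Finset.mem_coe.mpr hqU))).2
              have hbwU : b :: w ∈ U := hbw b hbwL
              have heq : b :: w = q :=
                hcode (b :: w) (Finset.mem_coe.mpr hbwU) q (Finset.mem_coe.mpr hqU) ⟨t₀, hy2⟩
              apply hqT
              rw [← heq]
              exact Finset.mem_filter.mpr ⟨hbwU, b, rfl⟩
          · rw [hpw, hqw]
      have hlen'' : ∀ x ∈ U'', m ≤ x.length := by
        intro x hx
        rcases (hmem x).mp hx with ⟨hxU, _⟩ | rfl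
        · exact hlen x hxU
        · exact hwm
      have hcomp'' : Complete L (U'' : Set (List A)) (w.length + 1) := by
        intro x hx hxlen
        obtain ⟨v, hv, hsuf⟩ := hcompK' x hx hxlen
        by_cases hvT : v ∈ T
        · obtain ⟨hvU, b, rfl⟩ := Finset.mem_filter.mp hvT
          exact ⟨w, Finset.mem_coe.mpr ((hmem w).mpr (Or.inr rfl)),
            (List.suffix_cons b w).trans hsuf⟩
        · exact ⟨v, Finset.mem_coe.mpr ((hmem v).mpr (Or.inl ⟨Finset.mem_coe.mp hv, hvT⟩)), hsuf⟩
      have hwnotsd : w ∉ U \ T := fun h => hwnotU (Finset.mem_sdiff.mp h).1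
      have hdisj : Disjoint (U \ T) ({w} : Finset (List A)) :=
        Finset.disjoint_singleton_right.mpr hwnotsd
      -- measure decreases
      have hsum_split : ∑ x ∈ U \ T, x.length + ∑ x ∈ T, x.length = ∑ x ∈ U, x.length :=
        Finset.sum_sdiff hTU
      have hsumU'' : ∑ x ∈ U'', x.length = ∑ x ∈ U \ T, x.length + w.length := by
        rw [hU'', Finset.sum_union hdisj, Finset.sum_singleton]
      have hTge : w.length + 1 ≤ ∑ x ∈ T, x.length := by
        have h1 := Finset.single_le_sum (f := fun x : List A => x.length)
          (fun i _ => Nat.zero_le _) hawT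
        simpa using h1
      have hmeas : ∑ x ∈ U'', x.length ≤ N := by omega
      have hIH := ih U'' hsub'' hcode'' hlen'' ⟨w.length + 1, hcomp''⟩ hmeas
      rw [← hIH]
      -- now: sums agree
      have hUsplit : ∑ x ∈ U \ T, ((rcount L x : ℤ) - 1) + ∑ x ∈ T, ((rcount L x : ℤ) - 1)
          = ∑ x ∈ U, ((rcount L x : ℤ) - 1) :=
        Finset.sum_sdiff hTU
      have hU''split : ∑ x ∈ U'', ((rcount L x : ℤ) - 1)
          = ∑ x ∈ U \ T, ((rcount L x : ℤ) - 1) + ((rcount L w : ℤ) - 1) := by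
        rw [hU'', Finset.sum_union hdisj, Finset.sum_singleton]
      set S : Finset A := Finset.univ.filter (fun b : A => b :: w ∈ L) with hS
      have hTimg : T = S.image (fun b : A => b :: w) := by
        ext x
        simp only [hT, Finset.mem_filter, Finset.mem_image, hS, Finset.mem_univ, true_and]
        constructor
        · rintro ⟨hxU, b, rfl⟩
          exact ⟨b, hsub (Finset.mem_coe.mpr hxU), rfl⟩
        · rintro ⟨b, hbL, rfl⟩
          exact ⟨hbw b hbL, b, rfl⟩
      have hsumT : ∑ x ∈ T, ((rcount L x : ℤ) - 1)
          = ∑ b ∈ S, ((rcount L (b :: w) : ℤ) - 1) := by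
        rw [hTimg, Finset.sum_image]
        intro b _ c _ h
        exact (List.cons.injEq b w c w).mp h |>.1
      -- counting: sum of rcounts over S equals ecount
      have hScard : S.card = lcount L w := by
        rw [lcount, ncard_setOf_eq, hS]
      have hrfilter : ∀ b : A, rcount L (b :: w)
          = (Finset.univ.filter (fun c : A => (b :: w) ++ [c] ∈ L)).card := by
        intro b
        rw [rcount, ncard_setOf_eq]
      have he : ecount L w
          = ∑ b : A, (Finset.univ.filter (fun c : A => (b :: w) ++ [c] ∈ L)).card := by
        rw [ecount, ncard_setOf_eq, Finset.card_filter, Fintype.sum_prod_type]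
        refine Finset.sum_congr rfl (fun b _ => ?_)
        rw [Finset.card_filter]
        refine Finset.sum_congr rfl (fun c _ => ?_)
        simp [List.cons_append]
      have hsum_e : ∑ b ∈ S, rcount L (b :: w) = ecount L w := by
        rw [he]
        rw [Finset.sum_congr rfl (fun b _ => hrfilter b)]
        refine Finset.sum_subset (Finset.subset_univ S) ?_
        intro b _ hbS
        rw [Finset.card_eq_zero, Finset.filter_eq_empty_iff]
        intro c _
        intro hc
        have hbL : b :: w ∈ L := (hfac (b :: w) [c] hc).1
        exact hbS (by simp [hS, hbL])
      have hneutw := hneut w hwL hwm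
      have hsumS : ∑ b ∈ S, ((rcount L (b :: w) : ℤ) - 1) = (rcount L w : ℤ) - 1 := by
        have hcast : (∑ b ∈ S, (rcount L (b :: w) : ℤ)) = (ecount L w : ℤ) := by
          exact_mod_cast congrArg (Nat.cast : ℕ → ℤ) hsum_e
        rw [Finset.sum_sub_distrib, Finset.sum_const, hcast]
        have hScard' : (S.card : ℤ) = (lcount L w : ℤ) := by exact_mod_cast hScard
        rw [nsmul_eq_mul, mul_one, hScard']
        linarith
      rw [← hUsplit, hU''split, hsumT, hsumS]
end Stmt14Aux

open Stmt14Aux in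
theorem stmt14 {A : Type*} [Fintype A] (L : Set (List A))
    (hfac : Factorial L) (hext : Extendable L) (m : ℕ)
    (hneut : ∀ w ∈ L, m ≤ w.length →
      (ecount L w : ℤ) = lcount L w + rcount L w - 1)
    (U : Set (List A)) (hUfin : U.Finite)
    (hUmax : IsMaximalSuffixCode L U)
    (hUlen : ∀ u ∈ U, m ≤ u.length) :
    ∑ᶠ u ∈ U, ((rcount L u : ℤ) - 1)
      = ∑ᶠ w ∈ {w : List A | w ∈ L ∧ w.length = m}, ((rcount L w : ℤ) - 1) := by
  obtain ⟨K, hK⟩ := maximal_complete hfac hUfin hUmax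
  have h1 : U = ↑hUfin.toFinset := (Set.Finite.coe_toFinset hUfin).symm
  rw [h1, finsum_mem_coe_finset]
  exact key hfac hext hneut (∑ u ∈ hUfin.toFinset, u.length) hUfin.toFinset
    (by rw [Set.Finite.coe_toFinset]; exact hUmax.1)
    (by rw [Set.Finite.coe_toFinset]; exact hUmax.2.1)
    (fun u hu => hUlen u (hUfin.mem_toFinset.mp hu))
    ⟨K, by rw [Set.Finite.coe_toFinset]; exact hK⟩
    le_rfl
end

section
/- Let X be an irreducible shift space over finite alphabet A such that every word of L(X) of length ≥ m is neutral. Then for every w ∈ L(X) with |w| ≥ m, the set of right return words R_X(w) is finite and |R_X(w)| = 1 + Σ_{v ∈ L_m(X)} (r(v) - 1). In particular, if every word is neutral (m = 0), then |R_X(w)| = |A| for every w ∈ L(X). -/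
/-- The set of positions at which `w` occurs as a factor of `v`. -/
def occSet {A : Type*} (w v : List A) : Set ℕ :=
  {i | i + w.length ≤ v.length ∧ w <+: v.drop i}

/-- `v` is a complete return word to `w` in `L`: `v ∈ L` has exactly two
occurrences of `w`, one as a proper prefix and one as a proper suffix. -/
def IsCompleteReturn {A : Type*} (L : Set (List A)) (w v : List A) : Prop :=
  v ∈ L ∧ w <+: v ∧ w <:+ v ∧ w.length < v.length ∧ Set.ncard (occSet w v) = 2

/-- The set of (right) return words to `w` in `L`. -/
def retWords {A : Type*} (L : Set (List A)) (w : List A) : Set (List A) :=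
  {u | IsCompleteReturn L w (w ++ u)}

section Proof15

variable {A : Type*}

lemma mem_occSet {w v : List A} {i : ℕ} :
    i ∈ occSet w v ↔ i + w.length ≤ v.length ∧ w <+: v.drop i := Iff.rfl

lemma occ_zero {w v : List A} (h : w <+: v) : (0 : ℕ) ∈ occSet w v := by
  refine ⟨by simpa using h.length_le, by simpa using h⟩

lemma occSet_finite (w v : List A) : (occSet w v).Finite :=
  (Set.finite_Iic v.length).subset (fun i hi => by
    simpa using le_trans (Nat.le_add_right i w.length) hi.1)

lemma occSet_cons {w v : List A} {a : A} {i : ℕ} :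
    (i + 1) ∈ occSet w (a :: v) ↔ i ∈ occSet w v := by
  constructor
  · rintro ⟨h1, h2⟩
    exact ⟨by simpa using Nat.succ_le_succ_iff.mp (by simpa [Nat.add_right_comm] using h1),
      by simpa using h2⟩
  · rintro ⟨h1, h2⟩
    exact ⟨by simp [Nat.add_right_comm]; omega, by simpa using h2⟩

/-- occurrences in a prefix are occurrences. -/
lemma occSet_mono {w p u : List A} (hp : p <+: u) {i : ℕ} (hi : i ∈ occSet w p) :
    i ∈ occSet w u := by
  refine ⟨le_trans hi.1 hp.length_le, hi.2.trans (hp.drop i)⟩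

/-- occurrence positions in `drop j u`. -/
lemma occSet_drop {w u : List A} {j i : ℕ} (hj : j ≤ u.length) :
    i ∈ occSet w (u.drop j) ↔ (j + i) ∈ occSet w u := by
  constructor
  · rintro ⟨h1, h2⟩
    refine ⟨by simp at h1; omega, ?_⟩
    rwa [List.drop_drop] at h2
  · rintro ⟨h1, h2⟩
    refine ⟨by simp; omega, ?_⟩
    rwa [List.drop_drop]

lemma finite_length_eq [Fintype A] (k : ℕ) : {v : List A | v.length = k}.Finite := by
  classical
  have : {v : List A | v.length = k} ⊆ (fun f : Fin k → A => List.ofFn f) '' Set.univ := by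
    intro v hv
    simp only [Set.mem_setOf_eq] at hv
    subst hv
    exact ⟨fun i => v.get i, trivial, by simp⟩
  exact (Set.finite_univ.image _).subset this

variable [Fintype A]

/-- words with a single occurrence of `w`, at position 0. -/
def II (L : Set (List A)) (w : List A) : Set (List A) := {u | u ∈ L ∧ occSet w u = {0}}

/-- complete return words to `w`. -/
def CRet (L : Set (List A)) (w : List A) : Set (List A) :=
  {z | z ∈ L ∧ w.length < z.length ∧ occSet w z = {0, z.length - w.length}}

/-- words of length `k` avoiding `w`. -/
def SSk (L : Set (List A)) (w : List A) (k : ℕ) : Set (List A) :=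
  {v | v ∈ L ∧ v.length = k ∧ occSet w v = ∅}

def IIk (L : Set (List A)) (w : List A) (k : ℕ) : Set (List A) :=
  {u | u ∈ II L w ∧ u.length = k}

def LLk (L : Set (List A)) (k : ℕ) : Set (List A) := {v | v ∈ L ∧ v.length = k}

noncomputable def fw (L : Set (List A)) (v : List A) : ℕ := rcount L v - 1

lemma LLk_finite (L : Set (List A)) (k : ℕ) : (LLk L k).Finite :=
  (finite_length_eq k).subset (fun v hv => hv.2)

lemma SSk_finite (L : Set (List A)) (w : List A) (k : ℕ) : (SSk L w k).Finite :=
  (finite_length_eq k).subset (fun v hv => hv.2.1)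

lemma IIk_finite (L : Set (List A)) (w : List A) (k : ℕ) : (IIk L w k).Finite :=
  (finite_length_eq k).subset (fun v hv => hv.2)

lemma rcount_pos {L : Set (List A)} (hfac : Factorial L) (hext : Extendable L)
    {v : List A} (hv : v ∈ L) : 1 ≤ rcount L v := by
  obtain ⟨a, b, hab⟩ := hext v hv
  have : v ++ [b] ∈ L := (hfac [a] (v ++ [b]) (by simpa using hab)).2
  have hne : {b : A | v ++ [b] ∈ L}.Nonempty := ⟨b, this⟩
  exact (Set.ncard_pos (Set.toFinite _)).mpr hne

lemma fw_cast {L : Set (List A)} (hfac : Factorial L) (hext : Extendable L)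
    {v : List A} (hv : v ∈ L) : ((fw L v : ℤ)) = (rcount L v : ℤ) - 1 := by
  have := rcount_pos hfac hext hv
  unfold fw
  omega

lemma II_mem_L {L : Set (List A)} {w u : List A} (h : u ∈ II L w) : u ∈ L := h.1

lemma II_prefix {L : Set (List A)} {w u : List A} (h : u ∈ II L w) :
    w <+: u ∧ w.length ≤ u.length := by
  have h0 : (0:ℕ) ∈ occSet w u := by rw [h.2]; rfl
  exact ⟨by simpa using h0.2, by simpa using h0.1⟩

set_option linter.unusedSectionVars false
set_option linter.unusedVariables false

lemma ecount_eq_sum {L : Set (List A)} (hfac : Factorial L) {v : List A} :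
    ecount L v = ∑ a ∈ (Set.toFinite {a : A | a :: v ∈ L}).toFinset, rcount L (a :: v) := by
  classical
  have hP : {p : A × A | p.1 :: (v ++ [p.2]) ∈ L}.Finite := Set.toFinite _
  rw [ecount, Set.ncard_eq_toFinset_card _ hP]
  rw [Finset.card_eq_sum_card_fiberwise
    (f := Prod.fst) (t := (Set.toFinite {a : A | a :: v ∈ L}).toFinset) ?_]
  · refine Finset.sum_congr rfl (fun a ha => ?_)
    have hR : {b : A | (a :: v) ++ [b] ∈ L}.Finite := Set.toFinite _
    rw [rcount, Set.ncard_eq_toFinset_card _ hR]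
    refine Finset.card_bij (fun p _ => p.2) ?_ ?_ ?_
    · rintro p hp
      simp only [Finset.mem_filter, Set.Finite.mem_toFinset, Set.mem_setOf_eq] at hp ⊢
      obtain ⟨h1, h2⟩ := hp
      rw [List.cons_append]
      rwa [← h2]
    · rintro p hp q hq h
      simp only [Finset.mem_filter] at hp hq
      exact Prod.ext (hp.2.trans hq.2.symm) h
    · intro b hb
      simp only [Set.Finite.mem_toFinset, Set.mem_setOf_eq] at hb
      refine ⟨(a, b), ?_, rfl⟩
      simp only [Finset.mem_filter, Set.Finite.mem_toFinset, Set.mem_setOf_eq]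
      exact ⟨by rwa [← List.cons_append], trivial⟩
  · intro p hp
    simp only [Finset.mem_coe, Set.Finite.mem_toFinset, Set.mem_setOf_eq] at hp ⊢
    exact (hfac (p.1 :: v) [p.2] (by simpa using hp)).1

lemma lcount_eq_card {L : Set (List A)} {v : List A} :
    lcount L v = (Set.toFinite {a : A | a :: v ∈ L}).toFinset.card := by
  rw [lcount, Set.ncard_eq_toFinset_card _ (Set.toFinite _)]

/-- The key recursion `(★)`: for a neutral word `v`,
`r(v) - 1 = Σ_{a : av ∈ L} (r(av) - 1)`. -/
lemma star {L : Set (List A)} {m : ℕ} (hfac : Factorial L) (hext : Extendable L)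
    (hneut : ∀ w ∈ L, m ≤ w.length → (ecount L w : ℤ) = lcount L w + rcount L w - 1)
    {v : List A} (hv : v ∈ L) (hm : m ≤ v.length) :
    ∑ᶠ a ∈ {a : A | a :: v ∈ L}, fw L (a :: v) = fw L v := by
  classical
  have hE : {a : A | a :: v ∈ L}.Finite := Set.toFinite _
  have hcoe : {a : A | a :: v ∈ L} = ↑hE.toFinset := by simp
  rw [hcoe, finsum_mem_coe_finset]
  have key : ((∑ a ∈ hE.toFinset, fw L (a :: v) : ℕ) : ℤ) = ((fw L v : ℕ) : ℤ) := by
    push_cast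
    have hmem : ∀ a ∈ hE.toFinset, a :: v ∈ L := by
      intro a ha; simpa using ha
    calc (∑ a ∈ hE.toFinset, (fw L (a :: v) : ℤ))
        = ∑ a ∈ hE.toFinset, ((rcount L (a :: v) : ℤ) - 1) :=
          Finset.sum_congr rfl (fun a ha => fw_cast hfac hext (hmem a ha))
      _ = (∑ a ∈ hE.toFinset, (rcount L (a :: v) : ℤ)) - hE.toFinset.card := by
          rw [Finset.sum_sub_distrib]; simp
      _ = (ecount L v : ℤ) - lcount L v := by
          rw [ecount_eq_sum hfac, lcount_eq_card]; push_cast; ring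
      _ = (rcount L v : ℤ) - 1 := by rw [hneut v hv hm]; ring
      _ = (fw L v : ℤ) := (fw_cast hfac hext hv).symm
  exact_mod_cast key

lemma occSet_tail_empty {w v : List A} {a : A} (h : occSet w (a :: v) ⊆ {0}) :
    occSet w v = ∅ := by
  ext i
  simp only [Set.mem_empty_iff_false, iff_false]
  intro hi
  have := h (occSet_cons.mpr hi)
  simp at this

lemma occSet_cons_subset {w v : List A} {a : A} (h : occSet w v = ∅) :
    occSet w (a :: v) ⊆ {0} := by
  intro i hi
  match i with
  | 0 => rfl
  | (j+1) =>
    exfalso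
    have := occSet_cons.mp hi
    rw [h] at this
    exact this

lemma biUnion_SSk {L : Set (List A)} {w : List A} (hfac : Factorial L) {k : ℕ}
    (hk : w.length ≤ k) :
    (⋃ v ∈ SSk L w k, (fun a => a :: v) '' {a : A | a :: v ∈ L})
      = IIk L w (k+1) ∪ SSk L w (k+1) := by
  ext z
  simp only [Set.mem_iUnion, Set.mem_image, Set.mem_union, Set.mem_setOf_eq]
  constructor
  · rintro ⟨v, ⟨hvL, hvlen, hvocc⟩, a, haL, rfl⟩
    have hsub : occSet w (a :: v) ⊆ {0} := occSet_cons_subset hvocc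
    by_cases h0 : (0:ℕ) ∈ occSet w (a :: v)
    · left
      refine ⟨⟨haL, ?_⟩, by simp [hvlen]⟩
      exact Set.Subset.antisymm hsub (by simpa using h0)
    · right
      refine ⟨haL, by simp [hvlen], ?_⟩
      ext i
      simp only [Set.mem_empty_iff_false, iff_false]
      intro hi
      have := hsub hi
      simp only [Set.mem_singleton_iff] at this
      exact h0 (this ▸ hi)
  · rintro (⟨⟨hzL, hzocc⟩, hzlen⟩ | ⟨hzL, hzlen, hzocc⟩)
    all_goals
      obtain ⟨a, v, rfl⟩ : ∃ a v, z = a :: v := by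
        cases z with
        | nil => simp at hzlen
        | cons a v => exact ⟨a, v, rfl⟩
      refine ⟨v, ⟨(hfac [a] v (by simpa using hzL)).2, by simpa using hzlen, ?_⟩, a, hzL, rfl⟩
    · exact occSet_tail_empty (by rw [hzocc])
    · exact occSet_tail_empty (by rw [hzocc]; simp)

lemma biUnion_LLk {L : Set (List A)} (hfac : Factorial L) {k : ℕ} :
    (⋃ v ∈ LLk L k, (fun a => a :: v) '' {a : A | a :: v ∈ L}) = LLk L (k+1) := by
  ext z
  simp only [Set.mem_iUnion, Set.mem_image, Set.mem_setOf_eq]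
  constructor
  · rintro ⟨v, ⟨hvL, hvlen⟩, a, haL, rfl⟩
    exact ⟨haL, by simp [hvlen]⟩
  · rintro ⟨hzL, hzlen⟩
    obtain ⟨a, v, rfl⟩ : ∃ a v, z = a :: v := by
      cases z with
      | nil => simp at hzlen
      | cons a v => exact ⟨a, v, rfl⟩
    exact ⟨v, ⟨(hfac [a] v (by simpa using hzL)).2, by simpa using hzlen⟩, a, hzL, rfl⟩

lemma pairwiseDisjoint_cons (L : Set (List A)) (T : Set (List A)) :
    T.PairwiseDisjoint (fun v => (fun a => a :: v) '' {a : A | a :: v ∈ L}) := by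
  intro v _ v' _ hne
  simp only [Function.onFun, Set.disjoint_left]
  rintro z ⟨a, _, rfl⟩ ⟨a', _, h⟩
  have hv : v' = v := by simpa using congrArg List.tail h
  exact hne hv.symm

lemma sum_over_biUnion {L : Set (List A)} (T : Set (List A)) (hT : T.Finite) :
    ∑ᶠ z ∈ ⋃ v ∈ T, (fun a => a :: v) '' {a : A | a :: v ∈ L}, fw L z
      = ∑ᶠ v ∈ T, ∑ᶠ a ∈ {a : A | a :: v ∈ L}, fw L (a :: v) := by
  rw [finsum_mem_biUnion (pairwiseDisjoint_cons L T) hT (fun v _ => Set.toFinite _)]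
  refine finsum_mem_congr rfl (fun v _ => ?_)
  rw [finsum_mem_image (fun a _ a' _ h => by simpa using congrArg List.head? h)]

lemma disjoint_IIk_SSk (L : Set (List A)) (w : List A) (k : ℕ) :
    Disjoint (IIk L w k) (SSk L w k) := by
  rw [Set.disjoint_left]
  rintro z ⟨⟨_, hocc⟩, _⟩ ⟨_, _, hocc'⟩
  have : (0:ℕ) ∈ occSet w z := by rw [hocc]; rfl
  rw [hocc'] at this
  exact this

lemma step_SS {L : Set (List A)} {w : List A} {m : ℕ} (hfac : Factorial L) (hext : Extendable L)
    (hneut : ∀ w ∈ L, m ≤ w.length → (ecount L w : ℤ) = lcount L w + rcount L w - 1)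
    {k : ℕ} (hk : w.length ≤ k) (hm : m ≤ w.length) :
    ∑ᶠ v ∈ SSk L w k, fw L v
      = (∑ᶠ z ∈ IIk L w (k+1), fw L z) + ∑ᶠ z ∈ SSk L w (k+1), fw L z := by
  have h1 : ∑ᶠ v ∈ SSk L w k, fw L v
      = ∑ᶠ v ∈ SSk L w k, ∑ᶠ a ∈ {a : A | a :: v ∈ L}, fw L (a :: v) :=
    (finsum_mem_congr rfl (fun v hv => (star hfac hext hneut hv.1
      (by rw [hv.2.1]; omega)).symm))
  rw [h1, ← sum_over_biUnion _ (SSk_finite L w k), biUnion_SSk hfac hk,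
    finsum_mem_union (disjoint_IIk_SSk L w (k+1)) (IIk_finite L w (k+1)) (SSk_finite L w (k+1))]

lemma const_LL {L : Set (List A)} {m : ℕ} (hfac : Factorial L) (hext : Extendable L)
    (hneut : ∀ w ∈ L, m ≤ w.length → (ecount L w : ℤ) = lcount L w + rcount L w - 1)
    {k : ℕ} (hm : m ≤ k) :
    ∑ᶠ v ∈ LLk L k, fw L v = ∑ᶠ z ∈ LLk L (k+1), fw L z := by
  have h1 : ∑ᶠ v ∈ LLk L k, fw L v
      = ∑ᶠ v ∈ LLk L k, ∑ᶠ a ∈ {a : A | a :: v ∈ L}, fw L (a :: v) :=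
    (finsum_mem_congr rfl (fun v hv => (star hfac hext hneut hv.1
      (by rw [hv.2]; omega)).symm))
  rw [h1, ← sum_over_biUnion _ (LLk_finite L k), biUnion_LLk hfac]

def IIle (L : Set (List A)) (w : List A) (K : ℕ) : Set (List A) :=
  {u | u ∈ II L w ∧ u.length ≤ K}

lemma finite_length_le (K : ℕ) : {v : List A | v.length ≤ K}.Finite := by
  have : {v : List A | v.length ≤ K} = ⋃ j ∈ Set.Iic K, {v : List A | v.length = j} := by
    ext v; simp
  rw [this]
  exact (Set.finite_Iic K).biUnion (fun j _ => finite_length_eq j)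

lemma IIle_finite (L : Set (List A)) (w : List A) (K : ℕ) : (IIle L w K).Finite :=
  (finite_length_le K).subset (fun u hu => hu.2)

lemma II_self {L : Set (List A)} {w : List A} (hwL : w ∈ L) : w ∈ II L w := by
  refine ⟨hwL, ?_⟩
  ext i
  simp only [Set.mem_singleton_iff]
  constructor
  · rintro ⟨h1, _⟩; omega
  · rintro rfl; exact occ_zero List.prefix_rfl

lemma IIk_base {L : Set (List A)} {w : List A} (hwL : w ∈ L) :
    IIk L w w.length = {w} := by
  ext u
  simp only [IIk, Set.mem_setOf_eq, Set.mem_singleton_iff]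
  constructor
  · rintro ⟨hu, hlen⟩
    exact ((II_prefix hu).1.eq_of_length_le (by omega)).symm
  · rintro rfl; exact ⟨II_self hwL, rfl⟩

lemma LLk_base (L : Set (List A)) (w : List A) :
    LLk L w.length = IIk L w w.length ∪ SSk L w w.length := by
  ext v
  simp only [LLk, IIk, SSk, II, Set.mem_setOf_eq, Set.mem_union]
  constructor
  · rintro ⟨hvL, hvlen⟩
    have hsub : occSet w v ⊆ {0} := by
      rintro i ⟨h1, _⟩
      simp only [Set.mem_singleton_iff]
      omega
    by_cases h0 : (0:ℕ) ∈ occSet w v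
    · exact Or.inl ⟨⟨hvL, Set.Subset.antisymm hsub (by simpa using h0)⟩, hvlen⟩
    · refine Or.inr ⟨hvL, hvlen, ?_⟩
      ext i
      simp only [Set.mem_empty_iff_false, iff_false]
      intro hi
      exact h0 ((hsub hi) ▸ hi)
  · rintro (⟨⟨hvL, _⟩, hvlen⟩ | ⟨hvL, hvlen, _⟩) <;> exact ⟨hvL, hvlen⟩

lemma IIle_base {L : Set (List A)} {w : List A} :
    IIle L w w.length = IIk L w w.length := by
  ext u
  simp only [IIle, IIk, Set.mem_setOf_eq]
  exact and_congr_right (fun hu => ⟨fun h => le_antisymm h (II_prefix hu).2, fun h => h.le⟩)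

lemma IIle_step (L : Set (List A)) (w : List A) (K : ℕ) :
    IIle L w (K+1) = IIle L w K ∪ IIk L w (K+1) := by
  ext u
  simp only [IIle, IIk, Set.mem_setOf_eq, Set.mem_union]
  constructor
  · rintro ⟨hu, hlen⟩
    rcases Nat.lt_or_ge u.length (K+1) with h | h
    · exact Or.inl ⟨hu, by omega⟩
    · exact Or.inr ⟨hu, by omega⟩
  · rintro (⟨hu, hlen⟩ | ⟨hu, hlen⟩) <;> exact ⟨hu, by omega⟩

/-- The telescoped identity `(†)`. -/
lemma dagger {L : Set (List A)} {w : List A} {m : ℕ} (hfac : Factorial L) (hext : Extendable L)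
    (hneut : ∀ w ∈ L, m ≤ w.length → (ecount L w : ℤ) = lcount L w + rcount L w - 1)
    (hwL : w ∈ L) (hm : m ≤ w.length) {K : ℕ} (hK : w.length ≤ K) :
    ∑ᶠ v ∈ LLk L w.length, fw L v
      = (∑ᶠ u ∈ IIle L w K, fw L u) + ∑ᶠ v ∈ SSk L w K, fw L v := by
  induction K, hK using Nat.le_induction with
  | base =>
    rw [LLk_base L w, IIle_base,
      finsum_mem_union (disjoint_IIk_SSk L w w.length) (IIk_finite L w _) (SSk_finite L w _)]
  | succ K hK ih =>
    rw [ih, step_SS hfac hext hneut hK hm, IIle_step L w K,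
      finsum_mem_union ?_ (IIle_finite L w K) (IIk_finite L w (K+1))]
    · ring
    · rw [Set.disjoint_left]
      rintro u ⟨_, h1⟩ ⟨_, h2⟩
      omega

lemma mem_of_prefix {L : Set (List A)} (hfac : Factorial L) {p u : List A}
    (hp : p <+: u) (hu : u ∈ L) : p ∈ L := by
  obtain ⟨t, rfl⟩ := hp
  exact (hfac p t hu).1

lemma mem_of_suffix {L : Set (List A)} (hfac : Factorial L) {p u : List A}
    (hp : p <:+ u) (hu : u ∈ L) : p ∈ L := by
  obtain ⟨t, rfl⟩ := hp
  exact (hfac t p hu).2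

lemma II_prefix_closed {L : Set (List A)} {w : List A} (hfac : Factorial L)
    {u p : List A} (hu : u ∈ II L w) (hp : p <+: u) (hlen : w.length ≤ p.length) :
    p ∈ II L w := by
  refine ⟨mem_of_prefix hfac hp hu.1, ?_⟩
  refine Set.Subset.antisymm ?_ ?_
  · intro i hi
    have := occSet_mono hp hi
    rw [hu.2] at this
    exact this
  · have hw : w <+: p :=
      List.prefix_of_prefix_length_le (II_prefix hu).1 hp hlen
    intro i hi
    simp only [Set.mem_singleton_iff] at hi
    subst hi
    exact occ_zero hw

/-- If all of `IIk` levels above `K₀` carry zero weight, every long member of `II`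
has a unique right extension. -/
lemma rcount_eq_one_of_fw_zero {L : Set (List A)} (hfac : Factorial L) (hext : Extendable L)
    {u : List A} (hu : u ∈ L) (hfw : fw L u = 0) : rcount L u = 1 := by
  have := rcount_pos hfac hext hu
  unfold fw at hfw
  omega

lemma ext_unique {L : Set (List A)} {u : List A} (h1 : rcount L u = 1) {b b' : A}
    (hb : u ++ [b] ∈ L) (hb' : u ++ [b'] ∈ L) : b = b' := by
  obtain ⟨x, hx⟩ := Set.ncard_eq_one.mp h1
  have h1 : b ∈ {b : A | u ++ [b] ∈ L} := hb
  have h2 : b' ∈ {b : A | u ++ [b] ∈ L} := hb'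
  rw [hx] at h1 h2
  simp only [Set.mem_singleton_iff] at h1 h2
  rw [h1, h2]

lemma finsum_mem_zero_of_nat {S : Set (List A)} (hS : S.Finite) {g : List A → ℕ}
    (h : ∑ᶠ v ∈ S, g v = 0) : ∀ v ∈ S, g v = 0 := by
  intro v hv
  classical
  rw [← hS.coe_toFinset, finsum_mem_coe_finset] at h
  exact (Finset.sum_eq_zero_iff.mp h) v (hS.mem_toFinset.mpr hv)

/-- A nonincreasing sequence of naturals (from some point on) is eventually constant. -/
lemma eventually_const {σ : ℕ → ℕ} {n : ℕ} (hmono : ∀ k, n ≤ k → σ (k+1) ≤ σ k) :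
    ∃ K ≥ n, ∀ k ≥ K, σ k = σ K := by
  have hTne : (σ '' Set.Ici n).Nonempty := ⟨σ n, n, Set.mem_Ici.mpr le_rfl, rfl⟩
  obtain ⟨K, hKn, hKc⟩ := Nat.sInf_mem hTne
  refine ⟨K, hKn, fun k hk => ?_⟩
  have hmin : ∀ x ∈ σ '' Set.Ici n, sInf (σ '' Set.Ici n) ≤ x := fun x hx => Nat.sInf_le hx
  have hle : σ k ≤ σ K := by
    clear hmin hKc hTne
    induction k, hk using Nat.le_induction with
    | base => rfl
    | succ k hk ih => exact le_trans (hmono k (le_trans hKn hk)) ih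
  have hge : sInf (σ '' Set.Ici n) ≤ σ k := hmin (σ k) ⟨k, Set.mem_Ici.mpr (le_trans hKn hk), rfl⟩
  omega

lemma II_dropLast {L : Set (List A)} {w : List A} (hfac : Factorial L)
    {z : List A} (hz : z ∈ II L w) (hlen : w.length < z.length) :
    z.dropLast ∈ II L w :=
  II_prefix_closed hfac hz (List.dropLast_prefix z) (by simp; omega)

lemma exists_empty_level {L : Set (List A)} {w : List A} {m : ℕ}
    (hfac : Factorial L) (hext : Extendable L)
    (hirr : ∀ u ∈ L, ∀ v ∈ L, ∃ s : List A, u ++ s ++ v ∈ L)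
    (hneut : ∀ w ∈ L, m ≤ w.length → (ecount L w : ℤ) = lcount L w + rcount L w - 1)
    (hwL : w ∈ L) (hm : m ≤ w.length) :
    ∃ K, w.length ≤ K ∧ IIk L w K = ∅ := by
  classical
  by_contra hcon
  push_neg at hcon
  have hne : ∀ K, w.length ≤ K → (IIk L w K).Nonempty := hcon
  -- the S-sums are eventually constant
  have hσ : ∀ k, w.length ≤ k →
      (∑ᶠ v ∈ SSk L w (k+1), fw L v) ≤ ∑ᶠ v ∈ SSk L w k, fw L v := by
    intro k hk
    rw [step_SS hfac hext hneut hk hm]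
    omega
  obtain ⟨K₀, hK₀n, hK₀⟩ :=
    eventually_const (σ := fun k => ∑ᶠ v ∈ SSk L w k, fw L v) hσ
  -- beyond `K₀` the tree does not branch
  have hIIzero : ∀ k, K₀ + 1 ≤ k → ∀ u ∈ IIk L w k, fw L u = 0 := by
    intro k hk
    obtain ⟨j, rfl⟩ : ∃ j, k = j + 1 := ⟨k - 1, by omega⟩
    have hstep := step_SS hfac hext hneut (k := j) (le_trans hK₀n (by omega)) hm
    rw [hK₀ j (by omega), hK₀ (j+1) (by omega)] at hstep
    have h0 : ∑ᶠ z ∈ IIk L w (j+1), fw L z = 0 := by omega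
    exact finsum_mem_zero_of_nat (IIk_finite L w (j+1)) h0
  have hone : ∀ u ∈ II L w, K₀ + 1 ≤ u.length → rcount L u = 1 := by
    intro u hu hlen
    exact rcount_eq_one_of_fw_zero hfac hext hu.1
      (hIIzero u.length hlen u ⟨hu, rfl⟩)
  -- level sizes are eventually constant
  have hρ : ∀ k, K₀ + 1 ≤ k → (IIk L w (k+1)).ncard ≤ (IIk L w k).ncard := by
    intro k hk
    refine Set.ncard_le_ncard_of_injOn List.dropLast ?_ ?_ (IIk_finite L w k)
    · rintro z ⟨hz, hzlen⟩
      refine ⟨II_dropLast hfac hz ?_, by simp [hzlen]⟩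
      have := (II_prefix hz).2
      omega
    · rintro z₁ ⟨hz₁, hl₁⟩ z₂ ⟨hz₂, hl₂⟩ hdl
      have hne₁ : z₁ ≠ [] := by intro h; rw [h] at hl₁; simp at hl₁
      have hne₂ : z₂ ≠ [] := by intro h; rw [h] at hl₂; simp at hl₂
      have hu : z₁.dropLast ∈ II L w := by
        refine II_dropLast hfac hz₁ ?_
        have := (II_prefix hz₁).2
        omega
      have hr1 : rcount L z₁.dropLast = 1 := by
        refine hone _ hu ?_
        simp [hl₁]
        omega
      have e₁ : z₁.dropLast ++ [z₁.getLast hne₁] = z₁ := List.dropLast_append_getLast hne₁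
      have e₂ : z₂.dropLast ++ [z₂.getLast hne₂] = z₂ := List.dropLast_append_getLast hne₂
      have hb := ext_unique hr1 (b := z₁.getLast hne₁) (b' := z₂.getLast hne₂)
        (by rw [e₁]; exact hz₁.1) (by rw [hdl, e₂]; exact hz₂.1)
      rw [← e₁, ← e₂, hdl, hb]
  obtain ⟨K₁, hK₁n, hK₁⟩ :=
    eventually_const (σ := fun k => (IIk L w k).ncard) hρ
  -- surjectivity of the parent map beyond `K₁`
  have hsurj : ∀ k, K₁ ≤ k → ∀ u ∈ IIk L w k, ∃ b : A, u ++ [b] ∈ II L w := by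
    intro k hk u hu
    have hQP : ((IIk_finite L w (k+1)).toFinset.image List.dropLast)
        ⊆ (IIk_finite L w k).toFinset := by
      intro x hx
      simp only [Finset.mem_image, Set.Finite.mem_toFinset] at hx ⊢
      obtain ⟨z, ⟨hz, hzlen⟩, rfl⟩ := hx
      refine ⟨II_dropLast hfac hz ?_, by simp [hzlen]⟩
      have := (II_prefix hz).2
      omega
    have hinj : Set.InjOn List.dropLast (IIk L w (k+1)) := by
      intro z₁ h₁ z₂ h₂ hdl
      obtain ⟨hz₁, hl₁⟩ := h₁
      obtain ⟨hz₂, hl₂⟩ := h₂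
      have hne₁ : z₁ ≠ [] := by intro h; rw [h] at hl₁; simp at hl₁
      have hne₂ : z₂ ≠ [] := by intro h; rw [h] at hl₂; simp at hl₂
      have hu' : z₁.dropLast ∈ II L w := by
        refine II_dropLast hfac hz₁ ?_
        have := (II_prefix hz₁).2
        omega
      have hr1 : rcount L z₁.dropLast = 1 := by
        refine hone _ hu' ?_
        simp [hl₁]
        omega
      have e₁ : z₁.dropLast ++ [z₁.getLast hne₁] = z₁ := List.dropLast_append_getLast hne₁
      have e₂ : z₂.dropLast ++ [z₂.getLast hne₂] = z₂ := List.dropLast_append_getLast hne₂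
      have hb := ext_unique hr1 (b := z₁.getLast hne₁) (b' := z₂.getLast hne₂)
        (by rw [e₁]; exact hz₁.1) (by rw [hdl, e₂]; exact hz₂.1)
      rw [← e₁, ← e₂, hdl, hb]
    have hcard : ((IIk_finite L w (k+1)).toFinset.image List.dropLast).card
        = (IIk_finite L w k).toFinset.card := by
      rw [Finset.card_image_of_injOn (by rw [Set.Finite.coe_toFinset]; exact hinj)]
      rw [← Set.ncard_eq_toFinset_card _ (IIk_finite L w (k+1)),
        ← Set.ncard_eq_toFinset_card _ (IIk_finite L w k),
        hK₁ (k+1) (by omega), hK₁ k hk]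
    have heq := Finset.eq_of_subset_of_card_le hQP (le_of_eq hcard.symm)
    have hu' : u ∈ (IIk_finite L w (k+1)).toFinset.image List.dropLast := by
      rw [heq]
      exact (Set.Finite.mem_toFinset _).mpr hu
    simp only [Finset.mem_image, Set.Finite.mem_toFinset] at hu'
    obtain ⟨z, ⟨hz, hzlen⟩, rfl⟩ := hu'
    have hzne : z ≠ [] := by intro h; rw [h] at hzlen; simp at hzlen
    exact ⟨z.getLast hzne, by rw [List.dropLast_append_getLast hzne]; exact hz⟩
  -- forced path to a contradiction with irreducibility
  obtain ⟨u₀, hu₀, hu₀len⟩ := hne K₁ (by omega)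
  obtain ⟨s, hs⟩ := hirr u₀ hu₀.1 w hwL
  have hforced : ∀ t, t <+: s ++ w → u₀ ++ t ∈ II L w := by
    intro t
    induction t using List.reverseRecOn with
    | nil => intro _; simpa using hu₀
    | append_singleton t b ih =>
      intro ht
      have ht' : t <+: s ++ w := (List.prefix_append t [b]).trans ht
      have hu := ih ht'
      have hulen : (u₀ ++ t).length = K₁ + t.length := by simp [hu₀len]
      obtain ⟨b', hb'⟩ := hsurj (K₁ + t.length) (by omega) (u₀ ++ t) ⟨hu, hulen⟩
      have hbL : (u₀ ++ t) ++ [b] ∈ L := by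
        obtain ⟨r, hr⟩ := ht
        refine mem_of_prefix hfac ⟨r, ?_⟩ hs
        simpa [List.append_assoc] using congrArg (u₀ ++ ·) hr
      have hr1 : rcount L (u₀ ++ t) = 1 := hone _ hu (by omega)
      have hb := ext_unique hr1 hbL hb'.1
      rw [← List.append_assoc, hb]
      exact hb'
  have hz := hforced (s ++ w) List.prefix_rfl
  have hocc : (u₀.length + s.length) ∈ occSet w (u₀ ++ (s ++ w)) := by
    constructor
    · simp; omega
    · rw [← List.append_assoc]
      have hdrop : (u₀ ++ s ++ w).drop (u₀ ++ s).length = w := List.drop_left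
      rw [List.length_append] at hdrop
      rw [hdrop]
  rw [hz.2] at hocc
  simp only [Set.mem_singleton_iff] at hocc
  omega

lemma II_length_lt {L : Set (List A)} {w : List A} (hfac : Factorial L) {K : ℕ}
    (hK : w.length ≤ K) (hempty : IIk L w K = ∅) :
    ∀ u ∈ II L w, u.length < K := by
  intro u hu
  by_contra h
  push_neg at h
  have hp : u.take K ∈ II L w :=
    II_prefix_closed hfac hu (List.take_prefix K u) (by simp; omega)
  have hmem : u.take K ∈ IIk L w K := ⟨hp, by simp; omega⟩
  rw [hempty] at hmem
  exact hmem

lemma SSk_empty_of_large {L : Set (List A)} {w : List A}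
    (hfac : Factorial L)
    (hirr : ∀ u ∈ L, ∀ v ∈ L, ∃ s : List A, u ++ s ++ v ∈ L)
    (hwL : w ∈ L) {K : ℕ}
    (hIIlt : ∀ u ∈ II L w, u.length < K) :
    ∀ k, K ≤ k → SSk L w k = ∅ := by
  intro k hk
  ext v
  simp only [Set.mem_empty_iff_false, iff_false]
  rintro ⟨hvL, hvlen, hvocc⟩
  obtain ⟨s, hs⟩ := hirr w hwL v hvL
  set u := w ++ s ++ v with hu
  have hul : u.length = w.length + s.length + v.length := by simp [hu]; omega
  have h0 : (0:ℕ) ∈ occSet w u := occ_zero ⟨s ++ v, by simp [hu, List.append_assoc]⟩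
  have hFne : (occSet_finite w u).toFinset.Nonempty :=
    ⟨0, (Set.Finite.mem_toFinset _).mpr h0⟩
  set j := (occSet_finite w u).toFinset.max' hFne with hjdef
  have hj : j ∈ occSet w u :=
    (Set.Finite.mem_toFinset _).mp ((occSet_finite w u).toFinset.max'_mem hFne)
  have hjmax : ∀ i ∈ occSet w u, i ≤ j :=
    fun i hi => (occSet_finite w u).toFinset.le_max' i ((Set.Finite.mem_toFinset _).mpr hi)
  have hjle : j ≤ u.length := by
    obtain ⟨h1, _⟩ := hj
    omega
  have hdropII : u.drop j ∈ II L w := by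
    refine ⟨mem_of_suffix hfac (List.drop_suffix j u) hs, ?_⟩
    ext i
    simp only [Set.mem_singleton_iff]
    constructor
    · intro hi
      have := hjmax (j + i) ((occSet_drop hjle).mp hi)
      omega
    · rintro rfl
      exact (occSet_drop hjle).mpr (by simpa using hj)
  have hlt : u.length - j < K := by
    have := hIIlt _ hdropII
    simpa using this
  have hvdrop : v = u.drop (w.length + s.length) := by
    have h : (w ++ s ++ v).drop (w ++ s).length = v := List.drop_left
    rw [List.length_append] at h
    exact h.symm
  by_cases hcase : w.length + s.length ≤ j
  · have hocc : (j - (w.length + s.length)) ∈ occSet w v := by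
      rw [hvdrop]
      refine (occSet_drop (by omega)).mpr ?_
      have heq : (w.length + s.length) + (j - (w.length + s.length)) = j := by omega
      rw [heq]
      exact hj
    rw [hvocc] at hocc
    exact hocc
  · omega

lemma child_classify {L : Set (List A)} {w : List A} {u : List A}
    (hu : u ∈ II L w) {b : A} (hb : u ++ [b] ∈ L) :
    u ++ [b] ∈ CRet L w ∨ (u ++ [b] ∈ II L w ∧ u ++ [b] ≠ w) := by
  have hwu := II_prefix hu
  have hlen : (u ++ [b]).length = u.length + 1 := by simp
  have hsub : occSet w (u ++ [b]) ⊆ {0, u.length + 1 - w.length} := by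
    rintro i ⟨h1, h2⟩
    simp only [Set.mem_insert_iff, Set.mem_singleton_iff]
    rcases Nat.lt_or_ge (i + w.length) (u.length + 1) with h | h
    · left
      have hile : i ≤ u.length := by omega
      rw [List.drop_append_of_le_length hile] at h2
      have hwi : w <+: u.drop i :=
        List.prefix_of_prefix_length_le h2 (List.prefix_append _ _) (by simp; omega)
      have : i ∈ occSet w u := ⟨by omega, hwi⟩
      rw [hu.2] at this
      simpa using this
    · right
      rw [hlen] at h1
      omega
  have h0 : (0:ℕ) ∈ occSet w (u ++ [b]) :=
    occ_zero (hwu.1.trans (List.prefix_append u [b]))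
  by_cases hend : (u.length + 1 - w.length) ∈ occSet w (u ++ [b])
  · left
    refine ⟨hb, by rw [hlen]; omega, ?_⟩
    rw [hlen]
    refine Set.Subset.antisymm hsub ?_
    rintro i (rfl | rfl)
    · exact h0
    · exact hend
  · right
    have hocc : occSet w (u ++ [b]) = {0} := by
      refine Set.Subset.antisymm ?_ (by simpa using h0)
      intro i hi
      rcases hsub hi with h | h
      · exact h
      · exact absurd (h ▸ hi) hend
    refine ⟨⟨hb, hocc⟩, ?_⟩
    intro hcon
    have := congrArg List.length hcon
    rw [hlen] at this
    omega

lemma node_parent {L : Set (List A)} {w : List A} (hfac : Factorial L) {z : List A}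
    (hz : z ∈ CRet L w ∨ (z ∈ II L w ∧ z ≠ w)) :
    ∃ u ∈ II L w, ∃ b : A, z = u ++ [b] := by
  have hzL : z ∈ L := by rcases hz with h | h; exacts [h.1, h.1.1]
  have hwz : w <+: z := by
    rcases hz with h | h
    · have h0 : (0:ℕ) ∈ occSet w z := by rw [h.2.2]; simp
      simpa using h0.2
    · exact (II_prefix h.1).1
  have hzlen : w.length < z.length := by
    rcases hz with h | h
    · exact h.2.1
    · rcases Nat.lt_or_ge w.length z.length with hh | hh
      · exact hh
      · exact absurd (hwz.eq_of_length_le hh).symm h.2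
  have hzne : z ≠ [] := by
    intro h
    rw [h] at hzlen
    simp at hzlen
  have hsub : occSet w z ⊆ {0, z.length - w.length} := by
    rcases hz with h | h
    · rw [h.2.2]
    · rw [h.1.2]; intro i hi; exact Or.inl hi
  have hu : z.dropLast ∈ II L w := by
    refine ⟨mem_of_prefix hfac (List.dropLast_prefix z) hzL, ?_⟩
    refine Set.Subset.antisymm ?_ ?_
    · intro i hi
      have hi' := occSet_mono (List.dropLast_prefix z) hi
      rcases hsub hi' with h | h
      · exact h
      · exfalso
        have h' : i = z.length - w.length := h
        have h1 := hi.1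
        rw [List.length_dropLast] at h1
        omega
    · rintro i rfl
      refine occ_zero (List.prefix_of_prefix_length_le hwz (List.dropLast_prefix z) ?_)
      rw [List.length_dropLast]
      omega
  exact ⟨z.dropLast, hu, z.getLast hzne, (List.dropLast_append_getLast hzne).symm⟩

lemma disjoint_CRet_II {L : Set (List A)} {w : List A} {z : List A}
    (h1 : z ∈ CRet L w) (h2 : z ∈ II L w) : False := by
  have hend : (z.length - w.length) ∈ occSet w z := by rw [h1.2.2]; simp
  rw [h2.2] at hend
  simp only [Set.mem_singleton_iff] at hend
  have := h1.2.1
  omega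

lemma CRet_count {L : Set (List A)} {w : List A} (hfac : Factorial L) (hext : Extendable L)
    (hwL : w ∈ L) (hIIfin : (II L w).Finite) :
    (CRet L w).Finite ∧ (CRet L w).ncard = 1 + ∑ᶠ u ∈ II L w, fw L u := by
  classical
  set IF := hIIfin.toFinset with hIF
  set B := IF.biUnion
    (fun u => (Set.toFinite {b : A | u ++ [b] ∈ L}).toFinset.image (fun b => u ++ [b])) with hB
  have hBmem : ∀ z, z ∈ B ↔ (z ∈ CRet L w ∨ (z ∈ II L w ∧ z ≠ w)) := by
    intro z
    rw [hB, Finset.mem_biUnion]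
    constructor
    · rintro ⟨u, hu, hz⟩
      simp only [Finset.mem_image, Set.Finite.mem_toFinset, Set.mem_setOf_eq] at hz
      obtain ⟨b, hb, rfl⟩ := hz
      exact child_classify (hIIfin.mem_toFinset.mp hu) hb
    · intro hz
      obtain ⟨u, hu, b, rfl⟩ := node_parent hfac hz
      refine ⟨u, hIIfin.mem_toFinset.mpr hu, ?_⟩
      simp only [Finset.mem_image, Set.Finite.mem_toFinset, Set.mem_setOf_eq]
      have hzL : u ++ [b] ∈ L := by rcases hz with h | h; exacts [h.1, h.1.1]
      exact ⟨b, hzL, rfl⟩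
  have hCfin : (CRet L w).Finite := by
    refine B.finite_toSet.subset ?_
    intro z hz
    exact (hBmem z).mpr (Or.inl hz)
  refine ⟨hCfin, ?_⟩
  set CF := hCfin.toFinset with hCF
  have hBcard : B.card = ∑ u ∈ IF, rcount L u := by
    rw [hB, Finset.card_biUnion]
    · refine Finset.sum_congr rfl (fun u hu => ?_)
      rw [Finset.card_image_of_injective _ (fun b₁ b₂ h => by simpa using h)]
      rw [rcount, Set.ncard_eq_toFinset_card _ (Set.toFinite _)]
    · intro u hu v hv huv
      simp only [Finset.disjoint_left, Finset.mem_image, Set.Finite.mem_toFinset,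
        Set.mem_setOf_eq]
      rintro z ⟨b, hb, rfl⟩ ⟨b', hb', hz⟩
      exact huv (List.append_inj' hz.symm rfl).1
  have hsplit : B = CF ∪ IF.erase w := by
    ext z
    rw [hBmem z, Finset.mem_union, Finset.mem_erase]
    rw [hCfin.mem_toFinset, hIIfin.mem_toFinset]
    tauto
  have hdisj : Disjoint CF (IF.erase w) := by
    simp only [Finset.disjoint_left]
    intro z hz hz'
    exact disjoint_CRet_II (hCfin.mem_toFinset.mp hz)
      (hIIfin.mem_toFinset.mp (Finset.mem_of_mem_erase hz'))
  have hwIF : w ∈ IF := hIIfin.mem_toFinset.mpr (II_self hwL)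
  have hIFcard : 1 ≤ IF.card := Finset.card_pos.mpr ⟨w, hwIF⟩
  have herase : (IF.erase w).card = IF.card - 1 := Finset.card_erase_of_mem hwIF
  have hsum : ∑ u ∈ IF, rcount L u = (∑ u ∈ IF, fw L u) + IF.card := by
    calc ∑ u ∈ IF, rcount L u = ∑ u ∈ IF, (fw L u + 1) := by
          refine Finset.sum_congr rfl (fun u hu => ?_)
          have h1 := rcount_pos hfac hext (hIIfin.mem_toFinset.mp hu).1
          unfold fw
          omega
      _ = (∑ u ∈ IF, fw L u) + ∑ u ∈ IF, 1 := Finset.sum_add_distrib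
      _ = (∑ u ∈ IF, fw L u) + IF.card := by rw [Finset.sum_const, smul_eq_mul, mul_one]
  have hcards : CF.card + (IF.card - 1) = (∑ u ∈ IF, fw L u) + IF.card := by
    rw [← herase, ← Finset.card_union_of_disjoint hdisj, ← hsplit, hBcard, hsum]
  have hCFcard : CF.card = 1 + ∑ u ∈ IF, fw L u := by omega
  rw [Set.ncard_eq_toFinset_card _ hCfin, ← hCF, hCFcard]
  congr 1
  rw [← finsum_mem_coe_finset, hIF, Set.Finite.coe_toFinset]

lemma CRet_eq_isCompleteReturn (L : Set (List A)) (w : List A) :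
    CRet L w = {z | IsCompleteReturn L w z} := by
  ext z
  simp only [CRet, Set.mem_setOf_eq, IsCompleteReturn]
  constructor
  · rintro ⟨hzL, hlen, hocc⟩
    have h0 : (0:ℕ) ∈ occSet w z := by rw [hocc]; simp
    have hend : (z.length - w.length) ∈ occSet w z := by rw [hocc]; simp
    have hpre : w <+: z := by simpa using h0.2
    have heq : w = z.drop (z.length - w.length) := by
      refine hend.2.eq_of_length ?_
      rw [List.length_drop]
      omega
    refine ⟨hzL, hpre, List.suffix_iff_eq_drop.mpr heq, hlen, ?_⟩
    rw [hocc]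
    rw [Set.ncard_pair (by omega : (0:ℕ) ≠ z.length - w.length)]
  · rintro ⟨hzL, hpre, hsuf, hlen, hcard⟩
    refine ⟨hzL, hlen, ?_⟩
    have heq : w = z.drop (z.length - w.length) := List.suffix_iff_eq_drop.mp hsuf
    have hsub : ({0, z.length - w.length} : Set ℕ) ⊆ occSet w z := by
      rintro i (rfl | rfl)
      · exact occ_zero hpre
      · exact ⟨by omega, heq ▸ List.prefix_rfl⟩
    have hpc : ({0, z.length - w.length} : Set ℕ).ncard = 2 :=
      Set.ncard_pair (by omega : (0:ℕ) ≠ z.length - w.length)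
    exact (Set.eq_of_subset_of_ncard_le hsub (by omega) (occSet_finite w z)).symm

lemma CRet_eq_image (L : Set (List A)) (w : List A) :
    CRet L w = (fun u => w ++ u) '' retWords L w := by
  rw [CRet_eq_isCompleteReturn]
  ext z
  simp only [Set.mem_setOf_eq, Set.mem_image, retWords]
  constructor
  · intro hz
    obtain ⟨t, rfl⟩ := hz.2.1
    exact ⟨t, hz, rfl⟩
  · rintro ⟨t, ht, rfl⟩
    exact ht

end Proof15

theorem stmt15 {A : Type*} [Fintype A] (L : Set (List A))
    (hfac : Factorial L) (hext : Extendable L)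
    (hirr : ∀ u ∈ L, ∀ v ∈ L, ∃ s : List A, u ++ s ++ v ∈ L)
    (m : ℕ)
    (hneut : ∀ w ∈ L, m ≤ w.length →
      (ecount L w : ℤ) = lcount L w + rcount L w - 1)
    (w : List A) (hw : w ∈ L) (hwlen : m ≤ w.length) :
    (retWords L w).Finite ∧
      (Set.ncard (retWords L w) : ℤ)
        = 1 + ∑ᶠ v ∈ {v : List A | v ∈ L ∧ v.length = m},
            ((rcount L v : ℤ) - 1) := by
  classical
  obtain ⟨K, hK, hKempty⟩ := exists_empty_level hfac hext hirr hneut hw hwlen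
  have hIIlt := II_length_lt hfac hK hKempty
  have hIIfin : (II L w).Finite :=
    (finite_length_le K).subset (fun u hu => (hIIlt u hu).le)
  have hSS : SSk L w K = ∅ := SSk_empty_of_large hfac hirr hw hIIlt K le_rfl
  have hdag := dagger hfac hext hneut hw hwlen hK
  have hIIle : IIle L w K = II L w := by
    ext u
    exact ⟨fun hu => hu.1, fun hu => ⟨hu, (hIIlt u hu).le⟩⟩
  rw [hIIle, hSS, finsum_mem_empty, add_zero] at hdag
  -- `hdag : ∑ᶠ v ∈ LLk L w.length, fw L v = ∑ᶠ u ∈ II L w, fw L u`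
  obtain ⟨hCfin, hCcard⟩ := CRet_count hfac hext hw hIIfin
  have hconst : ∀ k, m ≤ k → ∑ᶠ v ∈ LLk L m, fw L v = ∑ᶠ v ∈ LLk L k, fw L v := by
    intro k hk
    induction k, hk using Nat.le_induction with
    | base => rfl
    | succ k hk ih => rw [ih, const_LL hfac hext hneut hk]
  have hinj : Function.Injective (fun u : List A => w ++ u) := fun a b h => by simpa using h
  have himg := CRet_eq_image L w
  have hretfin : (retWords L w).Finite := by
    rw [himg] at hCfin
    exact Set.Finite.of_finite_image hCfin hinj.injOn
  refine ⟨hretfin, ?_⟩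
  have hncard : (retWords L w).ncard = (CRet L w).ncard := by
    rw [himg, Set.ncard_image_of_injective _ hinj]
  have h1 : (retWords L w).ncard = 1 + ∑ᶠ v ∈ LLk L m, fw L v := by
    rw [hncard, hCcard, ← hdag, hconst w.length hwlen]
  have h2 : ∑ᶠ v ∈ {v : List A | v ∈ L ∧ v.length = m}, ((rcount L v : ℤ) - 1)
      = ((∑ᶠ v ∈ LLk L m, fw L v : ℕ) : ℤ) := by
    have hstep : ∑ᶠ v ∈ LLk L m, ((rcount L v : ℤ) - 1)
        = ∑ᶠ v ∈ LLk L m, ((fw L v : ℕ) : ℤ) :=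
      finsum_mem_congr rfl (fun v hv => (fw_cast hfac hext hv.1).symm)
    have hcast := (Nat.castAddMonoidHom ℤ).map_finsum_mem (fun v => fw L v) (LLk_finite L m)
    simp only [Nat.castAddMonoidHom, AddMonoidHom.coe_mk, ZeroHom.coe_mk] at hcast
    exact hstep.trans hcast.symm
  rw [h2, h1]
  push_cast
  ring
end

section
/- Let X be an eventually dendric shift space with threshold m. For any finite X-maximal suffix code U ⊆ L(X), any finite X-maximal prefix code V ⊆ L(X), and any w ∈ L(X) with |w| ≥ m, the generalized extension graph E_{U,V}(w) — the bipartite graph on L_U(w) ⊔ R_V(w) with edges {(u,v) : uwv ∈ L(X)} — is a tree. -/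
/-- The generalized extension graph `E_{U,V}(w)`: bipartite graph on
`L_U(w) ⊔ R_V(w)` with edges the pairs `(u,v)` such that `uwv ∈ L`. -/
def genExtGraph {A : Type*} (L : Set (List A)) (U V : Set (List A)) (w : List A) :
    SimpleGraph ({u : List A // u ∈ U ∧ u ++ w ∈ L} ⊕ {v : List A // v ∈ V ∧ w ++ v ∈ L}) where
  Adj x y :=
    match x, y with
    | Sum.inl u, Sum.inr v => u.1 ++ w ++ v.1 ∈ L
    | Sum.inr v, Sum.inl u => u.1 ++ w ++ v.1 ∈ L
    | _, _ => False
  symm := ⟨by rintro (u | v) (u' | v') h <;> first | exact h | exact h.elim⟩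
  loopless := ⟨by rintro (u | v) h <;> exact h.elim⟩

/-- `V` is a prefix code: no word of `V` is a proper prefix of another. -/
def IsPrefixCode {A : Type*} (V : Set (List A)) : Prop :=
  ∀ u ∈ V, ∀ v ∈ V, u <+: v → u = v

/-- `V ⊆ L` is an `X`-maximal prefix code. -/
def IsMaximalPrefixCode {A : Type*} (L V : Set (List A)) : Prop :=
  V ⊆ L ∧ IsPrefixCode V ∧
    ∀ V' : Set (List A), V' ⊆ L → IsPrefixCode V' → V ⊆ V' → V = V'


/-! ### Auxiliary development -/

open SimpleGraph

section GraphPrelim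

variable {V : Type*} {V' : Type*}

lemma reachable_lift {G : SimpleGraph V} {G' : SimpleGraph V'} (φ : V → V')
    (h : ∀ x y, G.Adj x y → G'.Reachable (φ x) (φ y)) {x y : V} (hr : G.Reachable x y) :
    G'.Reachable (φ x) (φ y) := by
  obtain ⟨p⟩ := hr
  induction p with
  | nil => exact Reachable.refl _
  | cons ha _ ih => exact (h _ _ ha).trans ih

lemma card_le_of_connected [Fintype V] {G : SimpleGraph V} [Fintype G.edgeSet]
    (h : G.Connected) : Fintype.card V ≤ G.edgeFinset.card + 1 := by
  classical
  have hne := h.nonempty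
  inhabit V
  choose f hf using fun v => (h v default).exists_walk_length_eq_dist
  have hnn : ∀ v : V, v ≠ default → ¬ (f v).Nil := fun v hv => Walk.not_nil_of_ne hv
  set F : V → Sym2 V := fun v =>
    if hv : v = default then s(default, default) else ((f v).firstDart (hnn v hv)).edge with hF
  have hsub : ∀ v ∈ ({default} : Finset V)ᶜ, F v ∈ G.edgeFinset := by
    intro v hv
    rw [Finset.mem_compl, Finset.mem_singleton] at hv
    simp only [hF, dif_neg hv, Set.mem_toFinset, mem_edgeFinset]
    exact (Dart.edge_mem _)
  have hinj : Set.InjOn F (({default} : Finset V)ᶜ : Finset V) := by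
    intro a ha b hb hab
    rw [Finset.coe_compl, Finset.coe_singleton, Set.mem_compl_iff, Set.mem_singleton_iff] at ha hb
    by_contra hne'
    rw [hF] at hab
    simp only [dif_neg ha, dif_neg hb] at hab
    rw [Walk.edge_firstDart, Walk.edge_firstDart, Sym2.eq_iff] at hab
    rcases hab with ⟨rfl, _⟩ | ⟨h1, h2⟩
    · exact hne' rfl
    · have da : G.dist b default + 1 ≤ G.dist a default := by
        have := G.dist_le ((f a).tail.copy h2 rfl)
        rw [Walk.length_copy] at this
        have := Nat.add_le_add_right this 1
        rwa [Walk.length_tail_add_one (hnn a ha), hf a] at this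
      have db : G.dist a default + 1 ≤ G.dist b default := by
        have := G.dist_le ((f b).tail.copy (h1.symm) rfl)
        rw [Walk.length_copy] at this
        have := Nat.add_le_add_right this 1
        rwa [Walk.length_tail_add_one (hnn b hb), hf b] at this
      omega
  have hcard := Finset.card_le_card_of_injOn F hsub hinj
  rw [Finset.card_compl, Finset.card_singleton] at hcard
  omega

lemma isTree_of_connected_card [Fintype V] {G : SimpleGraph V} [Fintype G.edgeSet]
    (h : G.Connected) (hcard : G.edgeFinset.card + 1 = Fintype.card V) : G.IsTree := by
  classical
  refine ⟨h, ?_⟩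
  intro v c hc
  cases c with
  | nil => exact hc.not_of_nil
  | @cons _ w _ hadj c' =>
    set e := s(v, w) with he
    have hemem : e ∈ (Walk.cons hadj c').edges := by simp [he]
    have hnb : ¬ G.IsBridge e := by
      rw [he, isBridge_iff_adj_and_forall_cycle_notMem hadj]
      intro hall
      exact hall (Walk.cons hadj c') hc hemem
    have hreach : (G \ fromEdgeSet {e}).Reachable v w := by
      by_contra hr
      exact hnb hr
    set G₂ : SimpleGraph V := G \ fromEdgeSet {e} with hG₂
    haveI : Fintype G₂.edgeSet := Fintype.ofFinite _
    have hEG₂ : G₂.edgeSet = G.edgeSet \ {e} := by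
      rw [hG₂, edgeSet_sdiff, edgeSet_fromEdgeSet]
      ext x
      simp only [Set.mem_diff, Set.mem_singleton_iff, Set.mem_setOf_eq]
      constructor
      · rintro ⟨hx, hx2⟩
        exact ⟨hx, fun hxe => hx2 ⟨hxe, by rintro hd; rw [hxe] at hd; exact hadj.ne hd⟩⟩
      · rintro ⟨hx, hx2⟩
        exact ⟨hx, fun ⟨h1, _⟩ => hx2 h1⟩
    have hconn₂ : G₂.Connected := by
      rw [connected_iff] at h ⊢
      refine ⟨?_, h.2⟩
      intro x y
      have := reachable_lift (G := G) (G' := G₂) id ?_ (h.1 x y)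
      · exact this
      · intro a b hab
        by_cases heq : s(a, b) = e
        · rw [he, Sym2.eq_iff] at heq
          rcases heq with ⟨rfl, rfl⟩ | ⟨rfl, rfl⟩
          · exact hreach
          · exact hreach.symm
        · exact SimpleGraph.Adj.reachable ⟨hab, by simp [heq, hab.ne]⟩
    have hle := card_le_of_connected hconn₂
    have hcard₂ : G₂.edgeFinset.card = G.edgeFinset.card - 1 := by
      have : G₂.edgeFinset = G.edgeFinset.erase e := by
        ext x
        simp [Set.mem_toFinset, hEG₂, Finset.mem_erase, and_comm]
      rw [this, Finset.card_erase_of_mem (by simp [Set.mem_toFinset]; exact hadj)]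
    have hpos : 1 ≤ G.edgeFinset.card := by
      have : e ∈ G.edgeFinset := by simp [Set.mem_toFinset]; exact hadj
      exact Finset.card_pos.mpr ⟨e, this⟩
    omega

lemma isTree_of_iso [Fintype V] [Fintype V'] {G : SimpleGraph V} {G' : SimpleGraph V'}
    (e : G ≃g G') (h : G.IsTree) : G'.IsTree := by
  classical
  haveI : Fintype G.edgeSet := Fintype.ofFinite _
  haveI : Fintype G'.edgeSet := Fintype.ofFinite _
  refine isTree_of_connected_card ?_ ?_
  · rw [connected_iff]
    refine ⟨?_, ⟨e h.isConnected.nonempty.some⟩⟩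
    intro x y
    have := reachable_lift (G := G) (G' := G') e
      (fun a b hab => SimpleGraph.Adj.reachable (e.map_adj_iff.mpr hab))
      (h.isConnected (e.symm x) (e.symm y))
    simpa using this
  · have hc := h.card_edgeFinset
    have h1 : G.edgeFinset.card = G'.edgeFinset.card := by
      rw [edgeFinset_card, edgeFinset_card]
      exact Fintype.card_congr e.mapEdgeSet
    have h2 : Fintype.card V = Fintype.card V' := Fintype.card_congr e.toEquiv
    omega

end GraphPrelim

section Bip

variable {α β γ : Type*}

/-- generic bipartite graph on `α ⊕ β` from a relation. -/
def bip (E : α → β → Prop) : SimpleGraph (α ⊕ β) where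
  Adj x y :=
    match x, y with
    | Sum.inl a, Sum.inr b => E a b
    | Sum.inr b, Sum.inl a => E a b
    | _, _ => False
  symm := ⟨by rintro (a | b) (c | d) h <;> first | exact h | exact h.elim⟩
  loopless := ⟨by rintro (a | b) h <;> exact h.elim⟩

@[simp] lemma bip_adj_ll (E : α → β → Prop) (a a' : α) :
    ¬ (bip E).Adj (Sum.inl a) (Sum.inl a') := fun h => h
@[simp] lemma bip_adj_rr (E : α → β → Prop) (b b' : β) :
    ¬ (bip E).Adj (Sum.inr b) (Sum.inr b') := fun h => h

/-- The edges of a bipartite graph biject with the defining pairs. -/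
noncomputable def bipEdgeEquiv (E : α → β → Prop) :
    {p : α × β // E p.1 p.2} ≃ (bip E).edgeSet := by
  apply Equiv.ofBijective (fun p => ⟨s(Sum.inl p.1.1, Sum.inr p.1.2), p.2⟩)
  constructor
  · rintro ⟨⟨a, b⟩, h⟩ ⟨⟨a', b'⟩, h'⟩ hab
    simp only [Subtype.ext_iff, Sym2.eq_iff] at hab
    rcases hab with ⟨h1, h2⟩ | ⟨h1, h2⟩
    · cases h1; cases h2; rfl
    · exact absurd h1 (by simp)
  · rintro ⟨e, he⟩
    induction e with
    | _ x y =>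
      cases x with
      | inl a =>
        cases y with
        | inl a' => exact absurd he (by simp [edgeSet])
        | inr b => exact ⟨⟨(a, b), he⟩, rfl⟩
      | inr b =>
        cases y with
        | inl a => exact ⟨⟨(a, b), he⟩, Subtype.ext (Sym2.eq_swap)⟩
        | inr b' => exact absurd he (by simp [edgeSet])

lemma bip_edgeFinset_card [Fintype α] [Fintype β] (E : α → β → Prop)
    [Fintype (bip E).edgeSet] :
    (bip E).edgeFinset.card = Nat.card {p : α × β // E p.1 p.2} := by
  rw [edgeFinset_card, ← Nat.card_eq_fintype_card]
  exact (Nat.card_congr (bipEdgeEquiv E)).symm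

lemma bip_star [Fintype α] [Fintype β] (E : α → β → Prop)
    (hβ : ∀ b b' : β, b = b') (hb : Nonempty β) (hE : ∀ a b, E a b) : (bip E).IsTree := by
  classical
  obtain ⟨b₀⟩ := hb
  haveI : Fintype (bip E).edgeSet := Fintype.ofFinite _
  refine isTree_of_connected_card ?_ ?_
  · rw [connected_iff]
    refine ⟨?_, ⟨Sum.inr b₀⟩⟩
    have key : ∀ x : α ⊕ β, (bip E).Reachable x (Sum.inr b₀) := by
      rintro (a | b)
      · exact SimpleGraph.Adj.reachable (by exact hE a b₀)
      · rw [hβ b b₀]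
    intro x y
    exact (key x).trans (key y).symm
  · rw [bip_edgeFinset_card]
    have h1 : Nat.card {p : α × β // E p.1 p.2} = Nat.card (α × β) :=
      Nat.card_congr (Equiv.subtypeUnivEquiv (fun p => hE p.1 p.2))
    have h2 : Fintype.card β = 1 := Fintype.card_eq_one_iff.mpr ⟨b₀, fun b => hβ b b₀⟩
    rw [h1, Nat.card_eq_fintype_card, Fintype.card_prod, h2, Fintype.card_sum, h2]
    ring

/-- The tree gluing lemma: splitting a vertex of a tree into the structure of
another tree yields a tree. -/
theorem bip_glue [Fintype α] [Fintype β] [Fintype γ]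
    (Eβ : α → β → Prop) (Es : α → Prop) (Eγ : α → γ → Prop)
    (hsub : ∀ a c, Eγ a c → Es a) (hγ : Nonempty γ)
    (hG' : (bip (fun a (ob : Option β) => ob.elim (Es a) (Eβ a))).IsTree)
    (hH : (bip (fun (a : {a // Es a}) (c : γ) => Eγ a.1 c)).IsTree) :
    (bip (fun a (bc : β ⊕ γ) => Sum.elim (Eβ a) (Eγ a) bc)).IsTree := by
  classical
  obtain ⟨c₀⟩ := hγ
  set G' := bip (fun a (ob : Option β) => ob.elim (Es a) (Eβ a)) with hG'def
  set H := bip (fun (a : {a // Es a}) (c : γ) => Eγ a.1 c) with hHdef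
  set G := bip (fun a (bc : β ⊕ γ) => Sum.elim (Eβ a) (Eγ a) bc) with hGdef
  haveI : Fintype G.edgeSet := Fintype.ofFinite _
  haveI : Fintype G'.edgeSet := Fintype.ofFinite _
  haveI : Fintype H.edgeSet := Fintype.ofFinite _
  have ψadj : ∀ (x y : {a // Es a} ⊕ γ), H.Adj x y →
      G.Adj (Sum.map Subtype.val (Sum.inr : γ → β ⊕ γ) x)
        (Sum.map Subtype.val (Sum.inr : γ → β ⊕ γ) y) := by
    rintro (a | c) (a' | c') h <;> first | exact h.elim | exact h
  have hψ : ∀ (x y : {a // Es a} ⊕ γ), H.Reachable x y →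
      G.Reachable (Sum.map Subtype.val (Sum.inr : γ → β ⊕ γ) x)
        (Sum.map Subtype.val (Sum.inr : γ → β ⊕ γ) y) :=
    fun x y h => reachable_lift _ (fun x y h => (ψadj x y h).reachable) h
  have hconn : G.Connected := by
    rw [connected_iff]
    refine ⟨?_, ⟨Sum.inr (Sum.inr c₀)⟩⟩
    set φ : α ⊕ Option β → α ⊕ (β ⊕ γ) := fun x =>
      match x with
      | Sum.inl a => Sum.inl a
      | Sum.inr (some b) => Sum.inr (Sum.inl b)
      | Sum.inr none => Sum.inr (Sum.inr c₀) with hφ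
    have hadj : ∀ x y, G'.Adj x y → G.Reachable (φ x) (φ y) := by
      have main : ∀ (a : α) (ob : Option β), G'.Adj (Sum.inl a) (Sum.inr ob) →
          G.Reachable (φ (Sum.inl a)) (φ (Sum.inr ob)) := by
        rintro a (_ | b) h
        · have hr := hH.isConnected (Sum.inl ⟨a, h⟩) (Sum.inr c₀)
          exact hψ _ _ hr
        · exact SimpleGraph.Adj.reachable (by exact h)
      rintro (a | ob) (a' | ob') h
      · exact h.elim
      · exact main a ob' h
      · exact (main a' ob h).symm
      · exact h.elim
    have key : ∀ x : α ⊕ (β ⊕ γ), G.Reachable x (Sum.inr (Sum.inr c₀)) := by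
      rintro (a | (b | c))
      · exact reachable_lift φ hadj (hG'.isConnected (Sum.inl a) (Sum.inr none))
      · exact reachable_lift φ hadj (hG'.isConnected (Sum.inr (some b)) (Sum.inr none))
      · exact hψ (Sum.inr c) (Sum.inr c₀) (hH.isConnected _ _)
    intro x y
    exact (key x).trans (key y).symm
  refine isTree_of_connected_card hconn ?_
  have hc1 := hG'.card_edgeFinset
  have hc2 := hH.card_edgeFinset
  rw [bip_edgeFinset_card] at hc1 hc2 ⊢
  have e1 : {p : α × (β ⊕ γ) // Sum.elim (Eβ p.1) (Eγ p.1) p.2} ≃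
      {p : α × β // Eβ p.1 p.2} ⊕ {p : α × γ // Eγ p.1 p.2} :=
    { toFun := fun x => match x with
        | ⟨(a, Sum.inl b), h⟩ => Sum.inl ⟨(a, b), h⟩
        | ⟨(a, Sum.inr c), h⟩ => Sum.inr ⟨(a, c), h⟩
      invFun := fun x => match x with
        | Sum.inl ⟨(a, b), h⟩ => ⟨(a, Sum.inl b), h⟩
        | Sum.inr ⟨(a, c), h⟩ => ⟨(a, Sum.inr c), h⟩
      left_inv := by rintro ⟨⟨a, (b | c)⟩, h⟩ <;> rfl
      right_inv := by rintro (⟨⟨a, b⟩, h⟩ | ⟨⟨a, c⟩, h⟩) <;> rfl }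
  have e2 : {p : α × Option β // p.2.elim (Es p.1) (Eβ p.1)} ≃
      {p : α × β // Eβ p.1 p.2} ⊕ {a : α // Es a} :=
    { toFun := fun x => match x with
        | ⟨(a, some b), h⟩ => Sum.inl ⟨(a, b), h⟩
        | ⟨(a, none), h⟩ => Sum.inr ⟨a, h⟩
      invFun := fun x => match x with
        | Sum.inl ⟨(a, b), h⟩ => ⟨(a, some b), h⟩
        | Sum.inr ⟨a, h⟩ => ⟨(a, none), h⟩
      left_inv := by rintro ⟨⟨a, (_ | b)⟩, h⟩ <;> rfl
      right_inv := by rintro (⟨⟨a, b⟩, h⟩ | ⟨a, h⟩) <;> rfl }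
  have e3 : {p : {a // Es a} × γ // Eγ p.1.1 p.2} ≃ {p : α × γ // Eγ p.1 p.2} :=
    { toFun := fun x => ⟨(x.1.1.1, x.1.2), x.2⟩
      invFun := fun x => ⟨(⟨x.1.1, hsub _ _ x.2⟩, x.1.2), x.2⟩
      left_inv := by rintro ⟨⟨⟨a, ha⟩, c⟩, h⟩; rfl
      right_inv := by rintro ⟨⟨a, c⟩, h⟩; rfl }
  have n1 := Nat.card_congr e1
  have n2 := Nat.card_congr e2
  have n3 := Nat.card_congr e3
  rw [Nat.card_sum] at n1 n2
  simp only [Fintype.card_sum, Fintype.card_option] at hc1 hc2 ⊢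
  have hcardEq : Nat.card {a : α // Es a} = Fintype.card {a : α // Es a} :=
    Nat.card_eq_fintype_card
  omega

end Bip

section Lang

variable {A : Type*} {L U V : Set (List A)}

/-- every long enough word of `L` has a suffix in `U`. -/
def SufCov (L U : Set (List A)) (N : ℕ) : Prop :=
  ∀ x ∈ L, N ≤ x.length → ∃ u ∈ U, u <:+ x

/-- every long enough word of `L` has a prefix in `V`. -/
def PreCov (L V : Set (List A)) (N : ℕ) : Prop :=
  ∀ x ∈ L, N ≤ x.length → ∃ v ∈ V, v <+: x

/-- the words of length 1 in `L`. -/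
def A1 (L : Set (List A)) : Set (List A) := {x | x ∈ L ∧ x.length = 1}

lemma extend_right (hfac : Factorial L) (hext : Extendable L) :
    ∀ k, ∀ x ∈ L, ∃ y, x ++ y ∈ L ∧ y.length = k := by
  intro k
  induction k with
  | zero => exact fun x hx => ⟨[], by simpa using hx, rfl⟩
  | succ k ih =>
    intro x hx
    obtain ⟨a, b, hab⟩ := hext x hx
    have hxb : x ++ [b] ∈ L := (hfac [a] (x ++ [b]) (by simpa using hab)).2
    obtain ⟨y, hy, hylen⟩ := ih (x ++ [b]) hxb
    exact ⟨[b] ++ y, by simpa [List.append_assoc] using hy, by simp [hylen]⟩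

lemma extend_left (hfac : Factorial L) (hext : Extendable L) :
    ∀ k, ∀ x ∈ L, ∃ y, y ++ x ∈ L ∧ y.length = k := by
  intro k
  induction k with
  | zero => exact fun x hx => ⟨[], by simpa using hx, rfl⟩
  | succ k ih =>
    intro x hx
    obtain ⟨a, b, hab⟩ := hext x hx
    have hax : [a] ++ x ∈ L := by
      refine (hfac ([a] ++ x) [b] ?_).1
      simpa [List.append_assoc] using hab
    obtain ⟨y, hy, hylen⟩ := ih ([a] ++ x) hax
    exact ⟨y ++ [a], by simpa [List.append_assoc] using hy, by simp [hylen]⟩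

lemma A1_sub : A1 L ⊆ L := fun _ h => h.1

lemma A1_finite [Fintype A] : (A1 L).Finite := by
  apply (Set.finite_range (fun a : A => [a])).subset
  rintro x ⟨-, hlen⟩
  obtain ⟨a, rfl⟩ := List.length_eq_one_iff.mp hlen
  exact ⟨a, rfl⟩

lemma A1_prefixCode : IsPrefixCode (A1 L) := by
  intro u hu v hv huv
  exact List.IsPrefix.eq_of_length huv (by rw [hu.2, hv.2])

lemma A1_preCov (hfac : Factorial L) : PreCov L (A1 L) 1 := by
  intro x hx hlen
  obtain ⟨a, t, rfl⟩ := List.exists_cons_of_ne_nil (l := x) (by rintro rfl; simp at hlen)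
  refine ⟨[a], ⟨(hfac [a] t (by simpa using hx)).1, rfl⟩, ⟨t, rfl⟩⟩

lemma sufCov_of_maximal (hUfin : U.Finite) (hU : IsMaximalSuffixCode L U) :
    ∃ N, SufCov L U N := by
  classical
  refine ⟨(hUfin.toFinset.sup (·.length)) + 1, ?_⟩
  intro x hx hlen
  by_contra hno
  push_neg at hno
  have hxU : x ∉ U := fun h => hno x h (List.suffix_refl x)
  have hcode : IsSuffixCode (insert x U) := by
    intro u hu v hv hsuf
    rcases Set.mem_insert_iff.mp hu with rfl | hu
    · rcases Set.mem_insert_iff.mp hv with rfl | hv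
      · rfl
      · exfalso
        have h1 : v.length ≤ hUfin.toFinset.sup (·.length) :=
          Finset.le_sup (f := (·.length)) (hUfin.mem_toFinset.mpr hv)
        have h2 := hsuf.length_le
        omega
    · rcases Set.mem_insert_iff.mp hv with hveq | hv
      · exact absurd (hveq ▸ hsuf) (hno u hu)
      · exact hU.2.1 u hu v hv hsuf
  have := hU.2.2 (insert x U) (Set.insert_subset hx hU.1) hcode (Set.subset_insert _ _)
  exact hxU (this ▸ Set.mem_insert x U)

lemma preCov_of_maximal (hVfin : V.Finite) (hV : IsMaximalPrefixCode L V) :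
    ∃ N, PreCov L V N := by
  classical
  refine ⟨(hVfin.toFinset.sup (·.length)) + 1, ?_⟩
  intro x hx hlen
  by_contra hno
  push_neg at hno
  have hxV : x ∉ V := fun h => hno x h (List.prefix_refl x)
  have hcode : IsPrefixCode (insert x V) := by
    intro u hu v hv hpre
    rcases Set.mem_insert_iff.mp hu with rfl | hu
    · rcases Set.mem_insert_iff.mp hv with rfl | hv
      · rfl
      · exfalso
        have h1 : v.length ≤ hVfin.toFinset.sup (·.length) :=
          Finset.le_sup (f := (·.length)) (hVfin.mem_toFinset.mpr hv)
        have h2 := hpre.length_le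
        omega
    · rcases Set.mem_insert_iff.mp hv with hveq | hv
      · exact absurd (hveq ▸ hpre) (hno u hu)
      · exact hV.2.1 u hu v hv hpre
  have := hV.2.2 (insert x V) (Set.insert_subset hx hV.1) hcode (Set.subset_insert _ _)
  exact hxV (this ▸ Set.mem_insert x V)

lemma factorial_rev (hfac : Factorial L) : Factorial (List.reverse ⁻¹' L) := by
  intro u v huv
  have : v.reverse ++ u.reverse ∈ L := by
    have := huv
    rwa [Set.mem_preimage, List.reverse_append] at this
  have h := hfac _ _ this
  exact ⟨by simpa using h.2, by simpa using h.1⟩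

lemma extendable_rev (hext : Extendable L) : Extendable (List.reverse ⁻¹' L) := by
  intro w hw
  obtain ⟨a, b, hab⟩ := hext w.reverse hw
  refine ⟨b, a, ?_⟩
  rw [Set.mem_preimage]
  have : (b :: (w ++ [a])).reverse = a :: (w.reverse ++ [b]) := by simp
  rw [this]
  exact hab

lemma prefixCode_rev (hUcode : IsSuffixCode U) : IsPrefixCode (List.reverse ⁻¹' U) := by
  intro u hu v hv huv
  obtain ⟨t, rfl⟩ := huv
  have hsuf : u.reverse <:+ (u ++ t).reverse := ⟨t.reverse, by simp⟩
  have := hUcode u.reverse hu (u ++ t).reverse hv hsuf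
  have := congrArg List.reverse this
  simpa using this

lemma preCov_rev {N : ℕ} (hUcov : SufCov L U N) :
    PreCov (List.reverse ⁻¹' L) (List.reverse ⁻¹' U) N := by
  intro x hx hlen
  obtain ⟨u, huU, t, ht⟩ := hUcov x.reverse hx (by simpa using hlen)
  refine ⟨u.reverse, by simpa using huU, ⟨t.reverse, ?_⟩⟩
  have := congrArg List.reverse ht
  simpa using this

end Lang

section Isos

variable {A : Type*} {L U V : Set (List A)} {w : List A}

lemma genExtGraph_eq_bip :
    genExtGraph L U V w = bip (fun (u : {u : List A // u ∈ U ∧ u ++ w ∈ L})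
      (v : {v : List A // v ∈ V ∧ w ++ v ∈ L}) => u.1 ++ w ++ v.1 ∈ L) := by
  ext (u | v) (u' | v') <;> exact Iff.rfl

noncomputable def isoBase (hfac : Factorial L) (w : List A) :
    extGraph L w ≃g genExtGraph L (A1 L) (A1 L) w := by
  refine ⟨Equiv.sumCongr (Equiv.ofBijective (fun a => ⟨[a.1], ⟨?_, rfl⟩, ?_⟩) ?_)
      (Equiv.ofBijective (fun b => ⟨[b.1], ⟨?_, rfl⟩, ?_⟩) ?_), ?_⟩
  · exact (hfac [a.1] w (by simpa using a.2)).1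
  · simpa using a.2
  · constructor
    · intro a a' h
      simp only [Subtype.mk.injEq, List.cons.injEq, and_true] at h
      exact Subtype.ext h
    · rintro ⟨u, ⟨huL, hlen⟩, huw⟩
      obtain ⟨a, rfl⟩ := List.length_eq_one_iff.mp hlen
      exact ⟨⟨a, by simpa using huw⟩, rfl⟩
  · exact (hfac w [b.1] b.2).2
  · exact b.2
  · constructor
    · intro b b' h
      simp only [Subtype.mk.injEq, List.cons.injEq, and_true] at h
      exact Subtype.ext h
    · rintro ⟨v, ⟨hvL, hlen⟩, hwv⟩
      obtain ⟨b, rfl⟩ := List.length_eq_one_iff.mp hlen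
      exact ⟨⟨b, hwv⟩, rfl⟩
  · rintro (a | b) (a' | b')
    · exact Iff.rfl
    · show ([a.1] ++ w) ++ [b'.1] ∈ L ↔ a.1 :: (w ++ [b'.1]) ∈ L
      simp
    · show ([a'.1] ++ w) ++ [b.1] ∈ L ↔ a'.1 :: (w ++ [b.1]) ∈ L
      simp
    · exact Iff.rfl

noncomputable def isoExtRev (L : Set (List A)) (w : List A) :
    extGraph (List.reverse ⁻¹' L) w ≃g extGraph L w.reverse := by
  refine ⟨(Equiv.sumCongr
      (Equiv.subtypeEquivRight (q := fun b : A => w.reverse ++ [b] ∈ L) ?_)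
      (Equiv.subtypeEquivRight (q := fun a : A => a :: w.reverse ∈ L) ?_)).trans
      (Equiv.sumComm _ _), ?_⟩
  · intro a
    rw [Set.mem_preimage]
    constructor
    · intro h; simpa using h
    · intro h; simpa using h
  · intro b
    rw [Set.mem_preimage]
    constructor
    · intro h; simpa using h
    · intro h; simpa using h
  · rintro (a | b) (a' | b')
    · exact Iff.rfl
    · show b'.1 :: (w.reverse ++ [a.1]) ∈ L ↔ a.1 :: (w ++ [b'.1]) ∈ (List.reverse ⁻¹' L)
      rw [Set.mem_preimage]
      constructor
      · intro h; simpa using h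
      · intro h; simpa using h
    · show b.1 :: (w.reverse ++ [a'.1]) ∈ L ↔ a'.1 :: (w ++ [b.1]) ∈ (List.reverse ⁻¹' L)
      rw [Set.mem_preimage]
      constructor
      · intro h; simpa using h
      · intro h; simpa using h
    · exact Iff.rfl

lemma evDendric_rev [Fintype A] (m : ℕ) (h : EvDendricWith L m) :
    EvDendricWith (List.reverse ⁻¹' L) m := by
  intro w hw hlen
  haveI : Fintype {a : A // a :: w ∈ (List.reverse ⁻¹' L)} := Fintype.ofFinite _
  haveI : Fintype {b : A // w ++ [b] ∈ (List.reverse ⁻¹' L)} := Fintype.ofFinite _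
  haveI : Fintype {a : A // a :: w.reverse ∈ L} := Fintype.ofFinite _
  haveI : Fintype {b : A // w.reverse ++ [b] ∈ L} := Fintype.ofFinite _
  exact isTree_of_iso (isoExtRev L w).symm (h w.reverse (by simpa using hw) (by simpa using hlen))

noncomputable def isoRev (L U V : Set (List A)) (w : List A) :
    genExtGraph L U V w ≃g
      genExtGraph (List.reverse ⁻¹' L) (List.reverse ⁻¹' V) (List.reverse ⁻¹' U) w.reverse :=
  { toFun := fun x => match x with
      | Sum.inl u => Sum.inr ⟨u.1.reverse, by
          simpa [Set.mem_preimage] using u.2.1, by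
          show (w.reverse ++ u.1.reverse).reverse ∈ L
          simpa using u.2.2⟩
      | Sum.inr v => Sum.inl ⟨v.1.reverse, by
          simpa [Set.mem_preimage] using v.2.1, by
          show (v.1.reverse ++ w.reverse).reverse ∈ L
          simpa using v.2.2⟩
    invFun := fun x => match x with
      | Sum.inl u' => Sum.inr ⟨u'.1.reverse, by simpa using u'.2.1, by
          have h := u'.2.2
          rw [Set.mem_preimage, List.reverse_append] at h
          simpa using h⟩
      | Sum.inr v' => Sum.inl ⟨v'.1.reverse, by simpa using v'.2.1, by
          have h := v'.2.2
          rw [Set.mem_preimage, List.reverse_append] at h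
          simpa using h⟩
    left_inv := by
      rintro (u | v)
      · exact congrArg Sum.inl (Subtype.ext (by simp))
      · exact congrArg Sum.inr (Subtype.ext (by simp))
    right_inv := by
      rintro (u' | v')
      · exact congrArg Sum.inl (Subtype.ext (by simp))
      · exact congrArg Sum.inr (Subtype.ext (by simp))
    map_rel_iff' := by
      rintro (u | v) (u' | v')
      · exact Iff.rfl
      · show (v'.1.reverse ++ w.reverse ++ u.1.reverse ∈ List.reverse ⁻¹' L) ↔
            u.1 ++ w ++ v'.1 ∈ L
        rw [Set.mem_preimage]
        constructor
        · intro h; simp only [List.reverse_append, List.reverse_reverse] at h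
          simpa [List.append_assoc] using h
        · intro h; simp only [List.reverse_append, List.reverse_reverse]
          simpa [List.append_assoc] using h
      · show (v.1.reverse ++ w.reverse ++ u'.1.reverse ∈ List.reverse ⁻¹' L) ↔
            u'.1 ++ w ++ v.1 ∈ L
        rw [Set.mem_preimage]
        constructor
        · intro h; simp only [List.reverse_append, List.reverse_reverse] at h
          simpa [List.append_assoc] using h
        · intro h; simp only [List.reverse_append, List.reverse_reverse]
          simpa [List.append_assoc] using h
      · exact Iff.rfl }

end Isos

section Induction

variable {A : Type*} [Fintype A]

theorem indRight (L : Set (List A)) (hfac : Factorial L) (hext : Extendable L) (m : ℕ)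
    (U : Set (List A)) (hUfin : U.Finite)
    (hbase : ∀ w ∈ L, m ≤ w.length → (genExtGraph L U (A1 L) w).IsTree) :
    ∀ n (V : Set (List A)) (hVfin : V.Finite), V ⊆ L → IsPrefixCode V →
      ∀ NV : ℕ, PreCov L V NV →
      (∑ v ∈ hVfin.toFinset, v.length) ≤ n →
      ∀ w ∈ L, m ≤ w.length → (genExtGraph L U V w).IsTree := by
  intro n
  induction n using Nat.strong_induction_on with
  | _ n IH =>
  intro V hVfin hVsub hVcode NV hVcov hsum w hw hwlen
  classical
  haveI instU : Fintype {u : List A // u ∈ U ∧ u ++ w ∈ L} :=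
    Set.Finite.fintype (hUfin.subset (fun u hu => hu.1))
  haveI instV : Fintype {v : List A // v ∈ V ∧ w ++ v ∈ L} :=
    Set.Finite.fintype (hVfin.subset (fun v hv => hv.1))
  by_cases hnil : ([] : List A) ∈ V
  · -- V = {[]} : the graph is a star
    have hVeq : V = {([] : List A)} := by
      apply Set.eq_of_subset_of_subset
      · intro v hv
        have := hVcode [] hnil v hv (List.nil_prefix)
        simp [← this]
      · intro v hv
        rw [Set.mem_singleton_iff] at hv
        rw [hv]; exact hnil
    subst hVeq
    rw [genExtGraph_eq_bip]
    refine bip_star _ ?_ ?_ ?_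
    · intro b b'
      apply Subtype.ext
      have h1 : b.1 = [] := b.2.1
      have h2 : b'.1 = [] := b'.2.1
      rw [h1, h2]
    · exact ⟨⟨[], rfl, by simpa using hw⟩⟩
    · intro a b
      have h1 : b.1 = [] := b.2.1
      show a.1 ++ w ++ b.1 ∈ L
      rw [h1]
      simpa using a.2.2
  · -- pick a maximal-length element of V
    have hVne : V.Nonempty := by
      obtain ⟨y, hy, hylen⟩ := extend_right hfac hext NV w hw
      obtain ⟨v, hvV, -⟩ := hVcov (w ++ y) hy (by simp [hylen])
      exact ⟨v, hvV⟩
    obtain ⟨vm, hvmF, hvmax⟩ := hVfin.toFinset.exists_max_image (·.length)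
      (by rwa [Set.Finite.toFinset_nonempty])
    have hvmV : vm ∈ V := hVfin.mem_toFinset.mp hvmF
    have hmax : ∀ v ∈ V, v.length ≤ vm.length :=
      fun v hv => hvmax v (hVfin.mem_toFinset.mpr hv)
    have hvmne : vm ≠ [] := fun h => hnil (h ▸ hvmV)
    by_cases hlen1 : vm.length ≤ 1
    · -- all words of V have length one: V = A1 L
      have hVA1 : V = A1 L := by
        apply Set.eq_of_subset_of_subset
        · intro v hv
          refine ⟨hVsub hv, ?_⟩
          have h1 := hmax v hv
          have h2 : v ≠ [] := fun h => hnil (h ▸ hv)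
          have h3 : 1 ≤ v.length := by
            rcases Nat.eq_zero_or_pos v.length with h | h
            · exact absurd (List.length_eq_zero_iff.mp h) h2
            · exact h
          omega
        · rintro x ⟨hxL, hxlen⟩
          obtain ⟨a, rfl⟩ := List.length_eq_one_iff.mp hxlen
          obtain ⟨y, hy, hylen⟩ := extend_right hfac hext NV [a] hxL
          obtain ⟨v₀, hv₀V, hv₀pre⟩ := hVcov ([a] ++ y) hy (by simp [hylen])
          have h1 : v₀.length ≤ 1 := le_trans (hmax v₀ hv₀V) hlen1
          have h2 : v₀ ≠ [] := fun h => hnil (h ▸ hv₀V)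
          have h3 : v₀.length = 1 := by
            rcases Nat.eq_zero_or_pos v₀.length with h | h
            · exact absurd (List.length_eq_zero_iff.mp h) h2
            · omega
          obtain ⟨b, rfl⟩ := List.length_eq_one_iff.mp h3
          have : b = a := (List.cons_prefix_cons.mp hv₀pre).1
          rwa [← this]
      rw [hVA1]
      exact hbase w hw hwlen
    · -- the splitting case
      push_neg at hlen1
      set p := vm.dropLast with hp
      set c := vm.getLast hvmne with hc
      have hvm' : p ++ [c] = vm := List.dropLast_append_getLast hvmne
      have hplen : p.length + 1 = vm.length := by
        rw [← hvm']; simp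
      have hppre : p <+: vm := ⟨[c], hvm'⟩
      have hpne : p ≠ vm := fun h => by
        rw [h] at hplen; omega
      have hpV : p ∉ V := fun h => hpne (hVcode p h vm hvmV hppre)
      have hpL : p ∈ L := (hfac p [c] (by rw [hvm']; exact hVsub hvmV)).1
      have hmax1 : ∀ v ∈ V, v.length ≤ p.length + 1 := by
        intro v hv; rw [hplen]; exact hmax v hv
      have key1 : ∀ v ∈ V, p <+: v → ∃ c', v = p ++ [c'] := by
        intro v hvV hpv
        obtain ⟨t, rfl⟩ := hpv
        have htne : t ≠ [] := by
          rintro rfl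
          exact hpV (by simpa using hvV)
        have hlt : t.length ≤ 1 := by
          have := hmax1 _ hvV
          rw [List.length_append] at this
          omega
        have h1 : t.length = 1 := by
          rcases Nat.eq_zero_or_pos t.length with h | h
          · exact absurd (List.length_eq_zero_iff.mp h) htne
          · omega
        obtain ⟨c', rfl⟩ := List.length_eq_one_iff.mp h1
        exact ⟨c', rfl⟩
      have key2 : ∀ c', p ++ [c'] ∈ L → p ++ [c'] ∈ V := by
        intro c' hpc
        obtain ⟨y, hy, hylen⟩ := extend_right hfac hext NV (p ++ [c']) hpc
        obtain ⟨v₀, hv₀V, hv₀pre⟩ := hVcov _ hy (by simp [hylen]; omega)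
        have hv₀len : v₀.length ≤ p.length + 1 := hmax1 _ hv₀V
        have hv₀pc : v₀ <+: p ++ [c'] :=
          List.prefix_of_prefix_length_le hv₀pre ⟨y, rfl⟩ (by simp [hv₀len])
        by_cases heq : v₀.length = p.length + 1
        · have : v₀ = p ++ [c'] := List.IsPrefix.eq_of_length hv₀pc (by simp [heq])
          exact this ▸ hv₀V
        · have h1 : v₀.length ≤ p.length := by omega
          have hv₀p : v₀ <+: p :=
            List.prefix_of_prefix_length_le hv₀pc ⟨[c'], rfl⟩ (by simpa using h1)
          have := hVcode v₀ hv₀V vm hvmV (hv₀p.trans hppre)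
          rw [this] at h1
          omega
      -- the new prefix code V'
      set V' : Set (List A) := insert p {v | v ∈ V ∧ ¬ p <+: v} with hV'
      have hV'fin : V'.Finite := (hVfin.subset (fun v hv => hv.1)).insert p
      have hV'sub : V' ⊆ L := by
        rw [hV']
        exact Set.insert_subset hpL (fun v hv => hVsub hv.1)
      have hV'code : IsPrefixCode V' := by
        intro u hu v hv huv
        rcases Set.mem_insert_iff.mp hu with rfl | hu'
        · rcases Set.mem_insert_iff.mp hv with rfl | hv'
          · rfl
          · exact absurd huv hv'.2
        · rcases Set.mem_insert_iff.mp hv with rfl | hv'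
          · have h1 : u <+: vm := huv.trans hppre
            have := hVcode u hu'.1 vm hvmV h1
            exfalso
            exact hu'.2 (this ▸ hppre)
          · exact hVcode u hu'.1 v hv'.1 huv
      have hV'cov : PreCov L V' NV := by
        intro x hx hxlen
        obtain ⟨v₀, hv₀V, hv₀pre⟩ := hVcov x hx hxlen
        by_cases hp₀ : p <+: v₀
        · exact ⟨p, Set.mem_insert _ _, hp₀.trans hv₀pre⟩
        · exact ⟨v₀, Set.mem_insert_iff.mpr (Or.inr ⟨hv₀V, hp₀⟩), hv₀pre⟩
      -- the sum decreases
      have hsub' : hV'fin.toFinset ⊆ insert p (hVfin.toFinset.erase vm) := by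
        intro v hv
        rw [Set.Finite.mem_toFinset] at hv
        rcases Set.mem_insert_iff.mp hv with rfl | hv'
        · exact Finset.mem_insert_self _ _
        · refine Finset.mem_insert_of_mem (Finset.mem_erase.mpr ⟨?_, hVfin.mem_toFinset.mpr hv'.1⟩)
          rintro rfl
          exact hv'.2 hppre
      have hpnotin : p ∉ hVfin.toFinset.erase vm := by
        intro h
        exact hpV (hVfin.mem_toFinset.mp (Finset.mem_of_mem_erase h))
      have hsum1 : (∑ v ∈ hV'fin.toFinset, v.length) ≤
          p.length + ∑ v ∈ hVfin.toFinset.erase vm, v.length := by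
        calc (∑ v ∈ hV'fin.toFinset, v.length)
            ≤ ∑ v ∈ insert p (hVfin.toFinset.erase vm), v.length :=
              Finset.sum_le_sum_of_subset hsub'
          _ = p.length + ∑ v ∈ hVfin.toFinset.erase vm, v.length :=
              Finset.sum_insert hpnotin
      have hsum2 : vm.length + (∑ v ∈ hVfin.toFinset.erase vm, v.length) =
          ∑ v ∈ hVfin.toFinset, v.length :=
        Finset.add_sum_erase _ _ hvmF
      have hlt : (∑ v ∈ hV'fin.toFinset, v.length) < n := by omega
      have hG'tree := IH _ hlt V' hV'fin hV'sub hV'code NV hV'cov le_rfl w hw hwlen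
      haveI instV' : Fintype {v : List A // v ∈ V' ∧ w ++ v ∈ L} :=
        Set.Finite.fintype (hV'fin.subset (fun v hv => hv.1))
      by_cases hwp : w ++ p ∈ L
      · -- glue case
        haveI instβ : Fintype {v : List A // (v ∈ V ∧ ¬ p <+: v) ∧ w ++ v ∈ L} :=
          Set.Finite.fintype (hVfin.subset (fun v hv => hv.1.1))
        haveI instγ : Fintype {c : A // (w ++ p) ++ [c] ∈ L} := Fintype.ofFinite _
        haveI instUwp : Fintype {u : List A // u ∈ U ∧ u ++ (w ++ p) ∈ L} :=
          Set.Finite.fintype (hUfin.subset (fun u hu => hu.1))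
        haveI instA1wp : Fintype {v : List A // v ∈ A1 L ∧ (w ++ p) ++ v ∈ L} :=
          Set.Finite.fintype (A1_finite.subset (fun v hv => hv.1))
        have hsubEs : ∀ (a : {u : List A // u ∈ U ∧ u ++ w ∈ L})
            (c : {c : A // (w ++ p) ++ [c] ∈ L}),
            a.1 ++ (w ++ p) ++ [c.1] ∈ L → a.1 ++ w ++ p ∈ L := by
          intro a c h
          have h2 : (a.1 ++ w ++ p) ++ [c.1] ∈ L := by
            simpa [List.append_assoc] using h
          exact (hfac _ _ h2).1
        have hγne : Nonempty {c : A // (w ++ p) ++ [c] ∈ L} := by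
          obtain ⟨y, hy, hylen⟩ := extend_right hfac hext 1 (w ++ p) hwp
          obtain ⟨c0, rfl⟩ := List.length_eq_one_iff.mp hylen
          exact ⟨⟨c0, hy⟩⟩
        -- transport G' to the Option-shaped bip graph
        have eOpt : bip (fun (a : {u : List A // u ∈ U ∧ u ++ w ∈ L})
              (ob : Option {v : List A // (v ∈ V ∧ ¬ p <+: v) ∧ w ++ v ∈ L}) =>
              ob.elim (a.1 ++ w ++ p ∈ L) (fun b => a.1 ++ w ++ b.1 ∈ L)) ≃g
            genExtGraph L U V' w := by
          refine ⟨Equiv.sumCongr (Equiv.refl _)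
            (Equiv.ofBijective (fun ob : Option {v : List A // (v ∈ V ∧ ¬ p <+: v) ∧ w ++ v ∈ L} =>
              match ob with
              | none => (⟨p, Set.mem_insert _ _, hwp⟩ :
                  {v : List A // v ∈ V' ∧ w ++ v ∈ L})
              | some b => ⟨b.1, Set.mem_insert_iff.mpr (Or.inr b.2.1), b.2.2⟩) ?_), ?_⟩
          · constructor
            · rintro (_ | b) (_ | b') h
              · rfl
              · exfalso
                have hval0 := Subtype.ext_iff.mp h
                have hval : p = b'.1 := hval0
                apply b'.2.1.2
                rw [← hval]
              · exfalso
                have hval0 := Subtype.ext_iff.mp h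
                have hval : b.1 = p := hval0
                apply b.2.1.2
                rw [hval]
              · have hval0 := Subtype.ext_iff.mp h
                have hval : b.1 = b'.1 := hval0
                rw [Subtype.ext hval]
            · rintro ⟨v, hvV', hwv⟩
              rcases Set.mem_insert_iff.mp hvV' with rfl | hv'
              · exact ⟨none, rfl⟩
              · exact ⟨some ⟨v, hv', hwv⟩, rfl⟩
          · rintro (a | (_ | b)) (a' | (_ | b')) <;> exact Iff.rfl
        have hG'bip := isTree_of_iso eOpt.symm hG'tree
        -- transport the base tree on w ++ p to the H-shaped bip graph
        have hHgen := hbase (w ++ p) hwp (le_trans hwlen (by simp))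
        have eH : bip (fun (a : {a : {u : List A // u ∈ U ∧ u ++ w ∈ L} // a.1 ++ w ++ p ∈ L})
              (c : {c : A // (w ++ p) ++ [c] ∈ L}) => a.1.1 ++ (w ++ p) ++ [c.1] ∈ L) ≃g
            genExtGraph L U (A1 L) (w ++ p) := by
          refine ⟨Equiv.sumCongr
            (Equiv.ofBijective
              (fun a : {a : {u : List A // u ∈ U ∧ u ++ w ∈ L} // a.1 ++ w ++ p ∈ L} =>
              (⟨a.1.1, a.1.2.1, by
                have h := a.2
                simpa [List.append_assoc] using h⟩ :
                {u : List A // u ∈ U ∧ u ++ (w ++ p) ∈ L})) ?_)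
            (Equiv.ofBijective (fun c : {c : A // (w ++ p) ++ [c] ∈ L} =>
              (⟨[c.1], ⟨(hfac _ _ c.2).2, rfl⟩, c.2⟩ :
                {v : List A // v ∈ A1 L ∧ (w ++ p) ++ v ∈ L})) ?_), ?_⟩
          · constructor
            · intro a a' h
              have hval0 := Subtype.ext_iff.mp h
              have hval : a.1.1 = a'.1.1 := hval0
              exact Subtype.ext (Subtype.ext hval)
            · rintro ⟨u, huU, huwp⟩
              refine ⟨⟨⟨u, huU, ?_⟩, ?_⟩, rfl⟩
              · exact (hfac (u ++ w) p (by simpa [List.append_assoc] using huwp)).1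
              · show u ++ w ++ p ∈ L
                simpa [List.append_assoc] using huwp
          · constructor
            · intro c c' h
              have hval0 := Subtype.ext_iff.mp h
              have hval : [c.1] = [c'.1] := hval0
              exact Subtype.ext (by simpa using hval)
            · rintro ⟨v, ⟨hvL, hvlen⟩, hwpv⟩
              obtain ⟨c', rfl⟩ := List.length_eq_one_iff.mp hvlen
              exact ⟨⟨c', hwpv⟩, rfl⟩
          · rintro (a | c) (a' | c') <;> exact Iff.rfl
        have hHbip := isTree_of_iso eH.symm hHgen
        -- glue
        have hglued := bip_glue
          (fun (a : {u : List A // u ∈ U ∧ u ++ w ∈ L})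
            (b : {v : List A // (v ∈ V ∧ ¬ p <+: v) ∧ w ++ v ∈ L}) => a.1 ++ w ++ b.1 ∈ L)
          (fun a => a.1 ++ w ++ p ∈ L)
          (fun a (c : {c : A // (w ++ p) ++ [c] ∈ L}) => a.1 ++ (w ++ p) ++ [c.1] ∈ L)
          hsubEs hγne hG'bip hHbip
        -- transport back to the goal
        have eFin : bip (fun (a : {u : List A // u ∈ U ∧ u ++ w ∈ L})
              (bc : {v : List A // (v ∈ V ∧ ¬ p <+: v) ∧ w ++ v ∈ L} ⊕
                {c : A // (w ++ p) ++ [c] ∈ L}) =>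
              Sum.elim (fun b => a.1 ++ w ++ b.1 ∈ L)
                (fun c => a.1 ++ (w ++ p) ++ [c.1] ∈ L) bc) ≃g
            genExtGraph L U V w := by
          refine ⟨Equiv.sumCongr (Equiv.refl _)
            (Equiv.ofBijective (fun bc : {v : List A // (v ∈ V ∧ ¬ p <+: v) ∧ w ++ v ∈ L} ⊕
                {c : A // (w ++ p) ++ [c] ∈ L} =>
              match bc with
              | Sum.inl b => (⟨b.1, b.2.1.1, b.2.2⟩ :
                  {v : List A // v ∈ V ∧ w ++ v ∈ L})
              | Sum.inr c => ⟨p ++ [c.1],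
                  key2 c.1 ((hfac w (p ++ [c.1]) (by simpa [List.append_assoc] using c.2)).2),
                  by simpa [List.append_assoc] using c.2⟩) ?_), ?_⟩
          · constructor
            · rintro (b | c) (b' | c') h
              · have hval0 := Subtype.ext_iff.mp h
                have hval : b.1 = b'.1 := hval0
                rw [Subtype.ext hval]
              · exfalso
                have hval0 := Subtype.ext_iff.mp h
                have hval : b.1 = p ++ [c'.1] := hval0
                exact b.2.1.2 (hval ▸ ⟨[c'.1], rfl⟩)
              · exfalso
                have hval0 := Subtype.ext_iff.mp h
                have hval : p ++ [c.1] = b'.1 := hval0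
                exact b'.2.1.2 (hval ▸ ⟨[c.1], rfl⟩)
              · have hval0 := Subtype.ext_iff.mp h
                have hval : p ++ [c.1] = p ++ [c'.1] := hval0
                have h2 : c.1 = c'.1 := by
                  have := List.append_cancel_left hval
                  simpa using this
                rw [Subtype.ext h2]
            · rintro ⟨v, hvV, hwv⟩
              by_cases hpv : p <+: v
              · obtain ⟨c', rfl⟩ := key1 v hvV hpv
                exact ⟨Sum.inr ⟨c', by simpa [List.append_assoc] using hwv⟩, rfl⟩
              · exact ⟨Sum.inl ⟨v, ⟨hvV, hpv⟩, hwv⟩, rfl⟩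
          · rintro (a | (b | c)) (a' | (b' | c'))
            · exact Iff.rfl
            · exact Iff.rfl
            · show a.1 ++ w ++ (p ++ [c'.1]) ∈ L ↔ a.1 ++ (w ++ p) ++ [c'.1] ∈ L
              constructor
              · intro h; simpa [List.append_assoc] using h
              · intro h; simpa [List.append_assoc] using h
            · exact Iff.rfl
            · exact Iff.rfl
            · exact Iff.rfl
            · show a'.1 ++ w ++ (p ++ [c.1]) ∈ L ↔ a'.1 ++ (w ++ p) ++ [c.1] ∈ L
              constructor
              · intro h; simpa [List.append_assoc] using h
              · intro h; simpa [List.append_assoc] using h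
            · exact Iff.rfl
            · exact Iff.rfl
        exact isTree_of_iso eFin hglued
      · -- w ++ p ∉ L : the graphs for V and V' coincide
        have hiff : ∀ v, (v ∈ V' ∧ w ++ v ∈ L) ↔ (v ∈ V ∧ w ++ v ∈ L) := by
          intro v
          constructor
          · rintro ⟨hv, hwv⟩
            rcases Set.mem_insert_iff.mp hv with rfl | hv'
            · exact absurd hwv hwp
            · exact ⟨hv'.1, hwv⟩
          · rintro ⟨hv, hwv⟩
            refine ⟨Set.mem_insert_iff.mpr (Or.inr ⟨hv, ?_⟩), hwv⟩
            intro hpv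
            obtain ⟨c', rfl⟩ := key1 v hv hpv
            exact hwp (hfac (w ++ p) [c'] (by simpa [List.append_assoc] using hwv)).1
        have e : genExtGraph L U V' w ≃g genExtGraph L U V w := by
          refine ⟨Equiv.sumCongr (Equiv.refl _) (Equiv.subtypeEquivRight hiff), ?_⟩
          rintro (u | v) (u' | v') <;> exact Iff.rfl
        exact isTree_of_iso e hG'tree

end Induction

section Stages

variable {A : Type*} [Fintype A]

theorem stage2 (L : Set (List A)) (hfac : Factorial L) (hext : Extendable L) (m : ℕ)
    (hdendric : EvDendricWith L m)
    (V : Set (List A)) (hVfin : V.Finite) (hVsub : V ⊆ L) (hVcode : IsPrefixCode V)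
    (NV : ℕ) (hVcov : PreCov L V NV)
    (w : List A) (hw : w ∈ L) (hwlen : m ≤ w.length) :
    (genExtGraph L (A1 L) V w).IsTree := by
  classical
  refine indRight L hfac hext m (A1 L) A1_finite ?_ _ V hVfin hVsub hVcode NV hVcov le_rfl
    w hw hwlen
  intro w' hw' hlen'
  haveI : Fintype {a : A // a :: w' ∈ L} := Fintype.ofFinite _
  haveI : Fintype {b : A // w' ++ [b] ∈ L} := Fintype.ofFinite _
  haveI : Fintype {u : List A // u ∈ A1 L ∧ u ++ w' ∈ L} :=
    Set.Finite.fintype (A1_finite.subset (fun x hx => hx.1))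
  haveI : Fintype {v : List A // v ∈ A1 L ∧ w' ++ v ∈ L} :=
    Set.Finite.fintype (A1_finite.subset (fun x hx => hx.1))
  exact isTree_of_iso (isoBase hfac w') (hdendric w' hw' hlen')

theorem stage3base (L : Set (List A)) (hfac : Factorial L) (hext : Extendable L) (m : ℕ)
    (hdendric : EvDendricWith L m)
    (U : Set (List A)) (hUfin : U.Finite) (hUsub : U ⊆ L) (hUcode : IsSuffixCode U)
    (NU : ℕ) (hUcov : SufCov L U NU)
    (w : List A) (hw : w ∈ L) (hwlen : m ≤ w.length) :
    (genExtGraph L U (A1 L) w).IsTree := by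
  classical
  have hUrfin : (List.reverse ⁻¹' U).Finite :=
    hUfin.preimage (List.reverse_injective.injOn)
  have h2 := stage2 (List.reverse ⁻¹' L) (factorial_rev hfac) (extendable_rev hext) m
      (evDendric_rev m hdendric) (List.reverse ⁻¹' U) hUrfin
      (fun u hu => Set.mem_preimage.mpr (hUsub hu)) (prefixCode_rev hUcode)
      NU (preCov_rev hUcov) w.reverse (by simpa using hw) (by simpa using hwlen)
  have e := isoRev (List.reverse ⁻¹' L) (A1 (List.reverse ⁻¹' L)) (List.reverse ⁻¹' U) w.reverse
  have hL : List.reverse ⁻¹' (List.reverse ⁻¹' L) = L := by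
    ext x; simp
  have hU' : List.reverse ⁻¹' (List.reverse ⁻¹' U) = U := by
    ext x; simp
  have hA : List.reverse ⁻¹' (A1 (List.reverse ⁻¹' L)) = A1 L := by
    ext x; simp [A1]
  have hw2 : w.reverse.reverse = w := by simp
  rw [hL, hU', hA, hw2] at e
  haveI : Fintype {u : List A // u ∈ A1 (List.reverse ⁻¹' L) ∧
      u ++ w.reverse ∈ (List.reverse ⁻¹' L)} :=
    Set.Finite.fintype (A1_finite.subset (fun x hx => hx.1))
  haveI : Fintype {v : List A // v ∈ (List.reverse ⁻¹' U) ∧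
      w.reverse ++ v ∈ (List.reverse ⁻¹' L)} :=
    Set.Finite.fintype (hUrfin.subset (fun x hx => hx.1))
  haveI : Fintype {u : List A // u ∈ U ∧ u ++ w ∈ L} :=
    Set.Finite.fintype (hUfin.subset (fun x hx => hx.1))
  haveI : Fintype {v : List A // v ∈ A1 L ∧ w ++ v ∈ L} :=
    Set.Finite.fintype (A1_finite.subset (fun x hx => hx.1))
  exact isTree_of_iso e h2

end Stages

theorem stmt17 {A : Type*} [Fintype A] (L : Set (List A))
    (hfac : Factorial L) (hext : Extendable L)
    (m : ℕ) (hdendric : EvDendricWith L m)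
    (U V : Set (List A)) (hUfin : U.Finite) (hVfin : V.Finite)
    (hU : IsMaximalSuffixCode L U) (hV : IsMaximalPrefixCode L V)
    (w : List A) (hw : w ∈ L) (hwlen : m ≤ w.length) :
    (genExtGraph L U V w).IsTree := by
  classical
  obtain ⟨NU, hUcov⟩ := sufCov_of_maximal hUfin hU
  obtain ⟨NV, hVcov⟩ := preCov_of_maximal hVfin hV
  exact indRight L hfac hext m U hUfin
    (fun w' hw' hlen' =>
      stage3base L hfac hext m hdendric U hUfin hU.1 hU.2.1 NU hUcov w' hw' hlen')
    _ V hVfin hV.1 hV.2.1 NV hVcov le_rfl w hw hwlen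
end
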